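/- arXiv:1601.00439 — 10 statements merged into one kernel-verified Lean document; each statement's English description precedes it below -/
import Mathlib

section
/- Let C, X, T, Y be random variables on a measurable space (Ω, 𝓕), where C takes values in a standard Borel space 𝒞, X in ℝ, T in {0,1} and Y in ℝ, and let P₀, P₁, Pₛ be probability measures on (Ω, 𝓕) with P₀(T=0)=1, P₁(T=1)=1, and Y integrable under each of P₀, P₁, Pₛ. Assume: (4a) the joint law of (C, X) is the same under P₀, P₁ and Pₛ; (4b) there exists a measurable function u : 𝒞×ℝ×{0,1} → ℝ such that u(C, X, T) is a version of the conditional expectation E_{P_σ}[Y | σ(C, X, T)] simultaneously for every σ ∈ {0, 1, s}; (sharp condition) for every σ ∈ {0, 1, s} and every bounded measurable h : {0,1} → ℝ, E_{P_σ}[h(T) | σ(C, X)] = E_{P_σ}[h(T) | σ(X)] P_σ-almost surely. Then Y is independent of the regime given (X, T): there exists a measurable function g : ℝ×{0,1} → ℝ such that g(X, T) is a version of E_{P_σ}[Y | σ(X, T)] simultaneously for every σ ∈ {0, 1, s}. -/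
open MeasureTheory

open scoped NNReal


lemma fin2_cases (s : Fin 2) : s = 0 ∨ s = 1 := by omega

/-- pull-out property in integral form -/
lemma pullout_integral {Ω : Type*} {m m0 : MeasurableSpace Ω} (hm : m ≤ m0) (μ : Measure Ω)
    [IsFiniteMeasure μ] {Z W : Ω → ℝ} (hZ : StronglyMeasurable[m] Z)
    (hW : Integrable W μ) (hZW : Integrable (fun ω => Z ω * W ω) μ) :
    ∫ ω, Z ω * W ω ∂μ = ∫ ω, Z ω * (μ[W|m]) ω ∂μ := by
  have h1 : μ[(fun ω => Z ω * W ω)|m] =ᵐ[μ] fun ω => Z ω * (μ[W|m]) ω :=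
    condExp_mul_of_stronglyMeasurable_left hZ hZW hW
  calc ∫ ω, Z ω * W ω ∂μ = ∫ ω, (μ[(fun ω => Z ω * W ω)|m]) ω ∂μ := (integral_condExp hm).symm
    _ = ∫ ω, Z ω * (μ[W|m]) ω ∂μ := integral_congr_ae h1

/-- factorization through `Prod.snd` for `comap Prod.snd`-measurable functions -/
lemma factor_snd {𝒞 : Type*} [MeasurableSpace 𝒞] (c₀ : 𝒞) {φ : 𝒞 × ℝ → ℝ}
    (hφ : Measurable[MeasurableSpace.comap (Prod.snd : 𝒞 × ℝ → ℝ) inferInstance] φ) :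
    ∃ f : ℝ → ℝ, Measurable f ∧ φ = fun p => f p.2 := by
  refine ⟨fun x => φ (c₀, x), ?_, ?_⟩
  · have hφ' : Measurable φ := hφ.mono measurable_snd.comap_le le_rfl
    exact hφ'.comp (measurable_const.prodMk measurable_id)
  · funext p
    obtain ⟨B, hB, hBe⟩ := hφ (measurableSet_singleton (φ (c₀, p.2)))
    have h₀ : (c₀, p.2) ∈ Prod.snd ⁻¹' B := by
      rw [hBe]; exact rfl
    have hp : p ∈ Prod.snd ⁻¹' B := h₀
    have := hBe ▸ hp
    simpa using this

/-- Theorem 4.4, sharp RDD: sufficient covariates plus the sharp-design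
condition imply `Y ⫫ Σ | (X, T)`: a single measurable function `g` of `(X, T)` is
simultaneously a version of `E_{P_σ}[Y | σ(X, T)]` in every regime `σ ∈ {0, 1, s}`. -/
theorem sharp_rdd_Y_indep_regime_given_XT
    {Ω 𝒞 : Type*} [MeasurableSpace Ω] [MeasurableSpace 𝒞] [StandardBorelSpace 𝒞]
    (C : Ω → 𝒞) (X : Ω → ℝ) (T : Ω → Fin 2) (Y : Ω → ℝ)
    (hC : Measurable C) (hX : Measurable X) (hT : Measurable T) (hY : Measurable Y)
    (P₀ P₁ Ps : Measure Ω)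
    [IsProbabilityMeasure P₀] [IsProbabilityMeasure P₁] [IsProbabilityMeasure Ps]
    (hT0 : P₀ {ω | T ω = 0} = 1) (hT1 : P₁ {ω | T ω = 1} = 1)
    (hYint : ∀ P ∈ ({P₀, P₁, Ps} : Set (Measure Ω)), Integrable Y P)
    -- (4a): the joint law of (C, X) is the same in all three regimes
    (h4a : Measure.map (fun ω => (C ω, X ω)) P₀ = Measure.map (fun ω => (C ω, X ω)) P₁ ∧
           Measure.map (fun ω => (C ω, X ω)) P₀ = Measure.map (fun ω => (C ω, X ω)) Ps)
    -- (4b): a single measurable u(C, X, T) is a version of E_{P_σ}[Y | σ(C, X, T)] in all regimes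
    (u : 𝒞 × ℝ × Fin 2 → ℝ) (hu_meas : Measurable u)
    (h4b : ∀ P ∈ ({P₀, P₁, Ps} : Set (Measure Ω)),
      (fun ω => u (C ω, X ω, T ω)) =ᵐ[P]
        P[Y | MeasurableSpace.comap (fun ω => (C ω, X ω, T ω)) inferInstance])
    -- sharp condition: T ⫫ C | (X, Σ): in every regime, for every bounded measurable h on {0,1},
    -- E_{P_σ}[h(T) | σ(C, X)] = E_{P_σ}[h(T) | σ(X)] a.s. (every h : Fin 2 → ℝ is bounded measurable)
    (hsharp : ∀ P ∈ ({P₀, P₁, Ps} : Set (Measure Ω)), ∀ h : Fin 2 → ℝ,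
      P[(fun ω => h (T ω)) | MeasurableSpace.comap (fun ω => (C ω, X ω)) inferInstance]
        =ᵐ[P] P[(fun ω => h (T ω)) | MeasurableSpace.comap X inferInstance]) :
    ∃ g : ℝ × Fin 2 → ℝ, Measurable g ∧
      ∀ P ∈ ({P₀, P₁, Ps} : Set (Measure Ω)),
        (fun ω => g (X ω, T ω)) =ᵐ[P]
          P[Y | MeasurableSpace.comap (fun ω => (X ω, T ω)) inferInstance] := by
  classical
  obtain ⟨h01, h0s⟩ := h4a
  have hCX : Measurable fun ω => (C ω, X ω) := hC.prodMk hX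
  have hCXT : Measurable fun ω => (C ω, X ω, T ω) := hC.prodMk (hX.prodMk hT)
  have hXT : Measurable fun ω => (X ω, T ω) := hX.prodMk hT
  -- the common law of (C, X)
  set ν : Measure (𝒞 × ℝ) := Measure.map (fun ω => (C ω, X ω)) P₀ with hνdef
  haveI : IsProbabilityMeasure ν := Measure.isProbabilityMeasure_map hCX.aemeasurable
  have hlaw : ∀ P ∈ ({P₀, P₁, Ps} : Set (Measure Ω)),
      Measure.map (fun ω => (C ω, X ω)) P = ν := by
    intro P hP
    simp only [Set.mem_insert_iff, Set.mem_singleton_iff] at hP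
    rcases hP with rfl | rfl | rfl
    · rfl
    · exact h01.symm
    · exact h0s.symm
  have hPmem : ∀ P ∈ ({P₀, P₁, Ps} : Set (Measure Ω)), IsProbabilityMeasure P := by
    intro P hP
    simp only [Set.mem_insert_iff, Set.mem_singleton_iff] at hP
    rcases hP with rfl | rfl | rfl <;> infer_instance
  have hP₀S : P₀ ∈ ({P₀, P₁, Ps} : Set (Measure Ω)) := by simp
  have hP₁S : P₁ ∈ ({P₀, P₁, Ps} : Set (Measure Ω)) := by simp
  -- nonemptiness
  have hΩne : Nonempty Ω := by
    by_contra h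
    rw [not_nonempty_iff] at h
    have h1 : P₀ Set.univ = 1 := measure_univ
    rw [Set.univ_eq_empty_iff.mpr h, measure_empty] at h1
    exact zero_ne_one h1
  obtain ⟨ω₀⟩ := hΩne
  -- the sections of u
  set v : Fin 2 → 𝒞 × ℝ → ℝ := fun t p => u (p.1, p.2, t) with hvdef
  have hv_meas : ∀ t, Measurable (v t) := fun t =>
    hu_meas.comp (measurable_fst.prodMk (measurable_snd.prodMk measurable_const))
  -- integrability of u (C, X, T)
  have huCXT : ∀ P ∈ ({P₀, P₁, Ps} : Set (Measure Ω)),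
      Integrable (fun ω => u (C ω, X ω, T ω)) P := by
    intro P hP
    haveI := hPmem P hP
    exact integrable_condExp.congr (h4b P hP).symm
  have hT0ae : ∀ᵐ ω ∂P₀, T ω = 0 :=
    (mem_ae_iff_prob_eq_one (hT (measurableSet_singleton 0))).mpr hT0
  have hT1ae : ∀ᵐ ω ∂P₁, T ω = 1 :=
    (mem_ae_iff_prob_eq_one (hT (measurableSet_singleton 1))).mpr hT1
  -- integrability of the sections under the common law
  have hvint_ν : ∀ t : Fin 2, Integrable (v t) ν := by
    intro t
    rcases fin2_cases t with rfl | rfl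
    · have h1 : Integrable (fun ω => v 0 (C ω, X ω)) P₀ := by
        refine (huCXT P₀ hP₀S).congr ?_
        filter_upwards [hT0ae] with ω hω
        rw [hω]
      exact (integrable_map_measure (hv_meas 0).aestronglyMeasurable hCX.aemeasurable).mpr h1
    · have h1 : Integrable (fun ω => v 1 (C ω, X ω)) P₁ := by
        refine (huCXT P₁ hP₁S).congr ?_
        filter_upwards [hT1ae] with ω hω
        rw [hω]
      rw [h01]
      exact (integrable_map_measure (hv_meas 1).aestronglyMeasurable hCX.aemeasurable).mpr h1
  -- conditional expectations over the common law, factored through the second coordinate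
  have hm2 : MeasurableSpace.comap (Prod.snd : 𝒞 × ℝ → ℝ) inferInstance
      ≤ (Prod.instMeasurableSpace : MeasurableSpace (𝒞 × ℝ)) :=
    measurable_snd.comap_le
  have hfact : ∀ t : Fin 2, ∃ f : ℝ → ℝ, Measurable f ∧ (ν[v t | (MeasurableSpace.comap (Prod.snd : 𝒞 × ℝ → ℝ) inferInstance)]) = fun p => f p.2 :=
    fun t => factor_snd (C ω₀) stronglyMeasurable_condExp.measurable
  choose f hf_meas hf_eq using hfact
  -- the candidate function g
  set g : ℝ × Fin 2 → ℝ := fun p => (if p.2 = 0 then (1:ℝ) else 0) * f 0 p.1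
      + (if p.2 = 1 then (1:ℝ) else 0) * f 1 p.1 with hgdef
  have hg_meas : Measurable g := by
    have h0 : MeasurableSet {p : ℝ × Fin 2 | p.2 = 0} := measurable_snd (measurableSet_singleton 0)
    have h1 : MeasurableSet {p : ℝ × Fin 2 | p.2 = 1} := measurable_snd (measurableSet_singleton 1)
    exact ((Measurable.ite h0 measurable_const measurable_const).mul
        ((hf_meas 0).comp measurable_fst)).add
      ((Measurable.ite h1 measurable_const measurable_const).mul
        ((hf_meas 1).comp measurable_fst))
  -- the main per-regime argument
  have key : ∀ P : Measure Ω, IsProbabilityMeasure P →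
      Measure.map (fun ω => (C ω, X ω)) P = ν →
      Integrable Y P →
      ((fun ω => u (C ω, X ω, T ω)) =ᵐ[P]
        P[Y | MeasurableSpace.comap (fun ω => (C ω, X ω, T ω)) inferInstance]) →
      (∀ h : Fin 2 → ℝ,
        P[(fun ω => h (T ω)) | MeasurableSpace.comap (fun ω => (C ω, X ω)) inferInstance]
          =ᵐ[P] P[(fun ω => h (T ω)) | MeasurableSpace.comap X inferInstance]) →
      (fun ω => g (X ω, T ω)) =ᵐ[P]
        P[Y | MeasurableSpace.comap (fun ω => (X ω, T ω)) inferInstance] := by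
    intro P hPP hlawP hYintP h4bP hsharpP
    haveI := hPP
    have hmX := hX.comap_le
    have hmCX := hCX.comap_le
    have hmCXT := hCXT.comap_le
    have hmXT := hXT.comap_le
    have hXle : (MeasurableSpace.comap X inferInstance) ≤ (MeasurableSpace.comap (fun ω => (C ω, X ω)) inferInstance) := by
      intro s hs
      obtain ⟨B, hB, rfl⟩ := hs
      exact ⟨(Prod.snd : 𝒞 × ℝ → ℝ) ⁻¹' B, measurable_snd (α := 𝒞) (β := ℝ) hB, rfl⟩
    -- integrability of the sections under P
    have hv_intP : ∀ t : Fin 2, Integrable (fun ω => u (C ω, X ω, t)) P := by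
      intro t
      have h1 : Integrable (v t) ν := hvint_ν t
      rw [← hlawP] at h1
      exact (integrable_map_measure (hv_meas t).aestronglyMeasurable hCX.aemeasurable).mp h1
    -- integrability of f t ∘ X under P
    have hfX_int : ∀ t : Fin 2, Integrable (fun ω => f t (X ω)) P := by
      intro t
      have h1 : Integrable (ν[v t | (MeasurableSpace.comap (Prod.snd : 𝒞 × ℝ → ℝ) inferInstance)])
          (Measure.map (fun ω => (C ω, X ω)) P) := by
        rw [hlawP]; exact integrable_condExp
      have h2 := (integrable_map_measure h1.aestronglyMeasurable hCX.aemeasurable).mp h1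
      refine h2.congr (Filter.Eventually.of_forall fun ω => ?_)
      rw [hf_eq t]; rfl
    -- f t ∘ X is a version of E_P[u(C,X,t) | σ(X)]
    have hfX_ce : ∀ t : Fin 2,
        (fun ω => f t (X ω)) =ᵐ[P] P[(fun ω => u (C ω, X ω, t)) | (MeasurableSpace.comap X inferInstance)] := by
      intro t
      refine ae_eq_condExp_of_forall_setIntegral_eq hmX (hv_intP t)
        (fun s _ _ => (hfX_int t).integrableOn) (fun s hs hfin => ?_) ?_
      · obtain ⟨B, hB, rfl⟩ := hs
        have hBm2 : MeasurableSet[(MeasurableSpace.comap (Prod.snd : 𝒞 × ℝ → ℝ) inferInstance)] (Prod.snd ⁻¹' B : Set (𝒞 × ℝ)) := ⟨B, hB, rfl⟩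
        have hsm : AEStronglyMeasurable (ν[v t | (MeasurableSpace.comap (Prod.snd : 𝒞 × ℝ → ℝ) inferInstance)])
            (Measure.map (fun ω => (C ω, X ω)) P) := by
          rw [hlawP]; exact (stronglyMeasurable_condExp.mono hm2).aestronglyMeasurable
        have e1 : ∫ p in Prod.snd ⁻¹' B, (ν[v t | (MeasurableSpace.comap (Prod.snd : 𝒞 × ℝ → ℝ) inferInstance)]) p
              ∂(Measure.map (fun ω => (C ω, X ω)) P)
            = ∫ ω in X ⁻¹' B, f t (X ω) ∂P := by
          rw [setIntegral_map (measurable_snd hB) hsm hCX.aemeasurable, hf_eq t]; rfl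
        have e2 : ∫ p in Prod.snd ⁻¹' B, (ν[v t | (MeasurableSpace.comap (Prod.snd : 𝒞 × ℝ → ℝ) inferInstance)]) p
              ∂(Measure.map (fun ω => (C ω, X ω)) P)
            = ∫ p in Prod.snd ⁻¹' B, v t p ∂(Measure.map (fun ω => (C ω, X ω)) P) := by
          rw [hlawP]; exact setIntegral_condExp hm2 (hvint_ν t) hBm2
        have e3 : ∫ p in Prod.snd ⁻¹' B, v t p ∂(Measure.map (fun ω => (C ω, X ω)) P)
            = ∫ ω in X ⁻¹' B, u (C ω, X ω, t) ∂P := by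
          rw [setIntegral_map (measurable_snd hB) (hv_meas t).aestronglyMeasurable
            hCX.aemeasurable]; rfl
        rw [← e1, e2, e3]
      · exact (((hf_meas t).comp (comap_measurable X)).stronglyMeasurable).aestronglyMeasurable
    -- the key "star" computation
    have star : ∀ (t : Fin 2) (Bt : Set ℝ), MeasurableSet Bt →
        ∫ ω, (if T ω = t then (1:ℝ) else 0)
            * (Bt.indicator (fun _ => (1:ℝ)) (X ω) * f t (X ω)) ∂P
          = ∫ ω, (if T ω = t then (1:ℝ) else 0)
            * (Bt.indicator (fun _ => (1:ℝ)) (X ω) * u (C ω, X ω, t)) ∂P := by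
      intro t Bt hBt
      set χ : Ω → ℝ := fun ω => if T ω = t then (1:ℝ) else 0 with hχdef
      set ψ : Ω → ℝ := fun ω => Bt.indicator (fun _ => (1:ℝ)) (X ω) with hψdef
      have hχm : Measurable χ :=
        Measurable.ite (hT (measurableSet_singleton t)) measurable_const measurable_const
      have hχb : ∀ ω, ‖χ ω‖ ≤ 1 := by
        intro ω; by_cases h : T ω = t <;> simp [hχdef, h]
      have hψb : ∀ ω, ‖ψ ω‖ ≤ 1 := by
        intro ω; by_cases h : X ω ∈ Bt <;> simp [hψdef, Set.indicator_apply, h]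
      have hψmX : Measurable[(MeasurableSpace.comap X inferInstance)] ψ :=
        (measurable_const.indicator hBt).comp (comap_measurable X)
      have hfXmX : Measurable[(MeasurableSpace.comap X inferInstance)] fun ω => f t (X ω) := (hf_meas t).comp (comap_measurable X)
      have hvmCX : Measurable[(MeasurableSpace.comap (fun ω => (C ω, X ω)) inferInstance)] fun ω => u (C ω, X ω, t) :=
        (hv_meas t).comp (comap_measurable (fun ω => (C ω, X ω)))
      have hχint : Integrable χ P := by
        have := (integrable_const (1:ℝ) (μ := P)).bdd_mul hχm.aestronglyMeasurable
          (Filter.Eventually.of_forall hχb)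
        simpa using this
      have hvP := hv_intP t
      have hZ1 : Integrable (fun ω => ψ ω * f t (X ω)) P :=
        (hfX_int t).bdd_mul (hψmX.mono hmX le_rfl).aestronglyMeasurable
          (Filter.Eventually.of_forall hψb)
      have hZ3 : Integrable (fun ω => ψ ω * u (C ω, X ω, t)) P :=
        hvP.bdd_mul (hψmX.mono hmX le_rfl).aestronglyMeasurable
          (Filter.Eventually.of_forall hψb)
      set pX : Ω → ℝ := P[χ | (MeasurableSpace.comap X inferInstance)] with hpXdef
      set pCX : Ω → ℝ := P[χ | (MeasurableSpace.comap (fun ω => (C ω, X ω)) inferInstance)] with hpCXdef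
      have hpXb : ∀ᵐ ω ∂P, |pX ω| ≤ ((1:ℝ≥0) : ℝ) :=
        ae_bdd_condExp_of_ae_bdd (Filter.Eventually.of_forall fun ω => by
          simpa [Real.norm_eq_abs] using hχb ω)
      have hsharpχ : pCX =ᵐ[P] pX := hsharpP (fun s => if s = t then (1:ℝ) else 0)
      -- step 1
      have s1 : ∫ ω, χ ω * (ψ ω * f t (X ω)) ∂P = ∫ ω, (ψ ω * f t (X ω)) * pX ω ∂P := by
        have h := pullout_integral hmX P (Z := fun ω => ψ ω * f t (X ω)) (W := χ)
          (hψmX.stronglyMeasurable.mul hfXmX.stronglyMeasurable) hχint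
          ((hZ1.bdd_mul hχm.aestronglyMeasurable (Filter.Eventually.of_forall hχb)).congr
            (Filter.Eventually.of_forall fun ω => by ring))
        calc ∫ ω, χ ω * (ψ ω * f t (X ω)) ∂P
            = ∫ ω, (ψ ω * f t (X ω)) * χ ω ∂P :=
              integral_congr_ae (Filter.Eventually.of_forall fun ω => by ring)
          _ = ∫ ω, (ψ ω * f t (X ω)) * pX ω ∂P := h
      -- step 2
      have hbound2 : ∀ᵐ ω ∂P, ‖ψ ω * pX ω‖ ≤ 1 := by
        filter_upwards [hpXb] with ω h1
        calc ‖ψ ω * pX ω‖ = ‖ψ ω‖ * ‖pX ω‖ := norm_mul _ _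
          _ ≤ 1 * 1 := by
              refine mul_le_mul (hψb ω) ?_ (norm_nonneg _) zero_le_one
              simpa [Real.norm_eq_abs] using h1
          _ = 1 := one_mul 1
      have s2 : ∫ ω, (ψ ω * f t (X ω)) * pX ω ∂P
          = ∫ ω, (ψ ω * pX ω) * u (C ω, X ω, t) ∂P := by
        have e1 : ∫ ω, (ψ ω * f t (X ω)) * pX ω ∂P
            = ∫ ω, (ψ ω * pX ω) * (P[(fun ω => u (C ω, X ω, t)) | (MeasurableSpace.comap X inferInstance)]) ω ∂P := by
          refine integral_congr_ae ?_
          filter_upwards [hfX_ce t] with ω hω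
          rw [← hω]; ring
        have h := pullout_integral hmX P (Z := fun ω => ψ ω * pX ω)
          (W := fun ω => u (C ω, X ω, t))
          (hψmX.stronglyMeasurable.mul stronglyMeasurable_condExp) hvP
          (hvP.bdd_mul
            ((hψmX.mono hmX le_rfl).aestronglyMeasurable.mul
              ((stronglyMeasurable_condExp.mono hmX).aestronglyMeasurable)) hbound2)
        rw [e1, ← h]
      -- step 3
      have s3 : ∫ ω, (ψ ω * pX ω) * u (C ω, X ω, t) ∂P
          = ∫ ω, (ψ ω * u (C ω, X ω, t)) * pCX ω ∂P := by
        refine integral_congr_ae ?_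
        filter_upwards [hsharpχ] with ω hω
        rw [← hω]; ring
      -- step 4
      have s4 : ∫ ω, (ψ ω * u (C ω, X ω, t)) * pCX ω ∂P
          = ∫ ω, χ ω * (ψ ω * u (C ω, X ω, t)) ∂P := by
        have hZ3sm : StronglyMeasurable[(MeasurableSpace.comap (fun ω => (C ω, X ω)) inferInstance)] fun ω => ψ ω * u (C ω, X ω, t) :=
          ((hψmX.mono hXle le_rfl).stronglyMeasurable).mul hvmCX.stronglyMeasurable
        have h := pullout_integral hmCX P (Z := fun ω => ψ ω * u (C ω, X ω, t)) (W := χ)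
          hZ3sm hχint
          ((hZ3.bdd_mul hχm.aestronglyMeasurable (Filter.Eventually.of_forall hχb)).congr
            (Filter.Eventually.of_forall fun ω => by ring))
        calc ∫ ω, (ψ ω * u (C ω, X ω, t)) * pCX ω ∂P
            = ∫ ω, (ψ ω * u (C ω, X ω, t)) * χ ω ∂P := h.symm
          _ = ∫ ω, χ ω * (ψ ω * u (C ω, X ω, t)) ∂P :=
              integral_congr_ae (Filter.Eventually.of_forall fun ω => by ring)
      exact s1.trans (s2.trans (s3.trans s4))
    -- integrability of g ∘ (X, T)
    have hif_meas : ∀ t : Fin 2, Measurable fun ω => (if T ω = t then (1:ℝ) else 0) := fun t =>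
      Measurable.ite (hT (measurableSet_singleton t)) measurable_const measurable_const
    have hif_bd : ∀ (t : Fin 2) ω, ‖(if T ω = t then (1:ℝ) else 0)‖ ≤ 1 := by
      intro t ω; by_cases h : T ω = t <;> simp [h]
    have hgint : Integrable (fun ω => g (X ω, T ω)) P := by
      have h0 : Integrable (fun ω => (if T ω = 0 then (1:ℝ) else 0) * f 0 (X ω)) P :=
        (hfX_int 0).bdd_mul (hif_meas 0).aestronglyMeasurable
          (Filter.Eventually.of_forall (hif_bd 0))
      have h1 : Integrable (fun ω => (if T ω = 1 then (1:ℝ) else 0) * f 1 (X ω)) P :=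
        (hfX_int 1).bdd_mul (hif_meas 1).aestronglyMeasurable
          (Filter.Eventually.of_forall (hif_bd 1))
      exact h0.add h1
    -- conclude with uniqueness of conditional expectation
    refine ae_eq_condExp_of_forall_setIntegral_eq hmXT hYintP
      (fun s _ _ => hgint.integrableOn) (fun s hs hfin => ?_) ?_
    · obtain ⟨B, hB, rfl⟩ := hs
      have hB0 : MeasurableSet {x : ℝ | (x, (0:Fin 2)) ∈ B} :=
        (measurable_id.prodMk measurable_const) hB
      have hB1 : MeasurableSet {x : ℝ | (x, (1:Fin 2)) ∈ B} :=
        (measurable_id.prodMk measurable_const) hB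
      have hAmeas : MeasurableSet ((fun ω => (X ω, T ω)) ⁻¹' B) := hXT hB
      -- integrable summands
      have hint_f : ∀ (t : Fin 2) (Bt : Set ℝ), MeasurableSet Bt →
          Integrable (fun ω => (if T ω = t then (1:ℝ) else 0)
            * (Bt.indicator (fun _ => (1:ℝ)) (X ω) * f t (X ω))) P := by
        intro t Bt hBt
        have hψb : ∀ ω, ‖Bt.indicator (fun _ => (1:ℝ)) (X ω)‖ ≤ 1 := by
          intro ω; by_cases h : X ω ∈ Bt <;> simp [Set.indicator_apply, h]
        have inner : Integrable (fun ω => Bt.indicator (fun _ => (1:ℝ)) (X ω) * f t (X ω)) P :=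
          (hfX_int t).bdd_mul ((measurable_const.indicator hBt).comp hX).aestronglyMeasurable
            (Filter.Eventually.of_forall hψb)
        exact inner.bdd_mul (hif_meas t).aestronglyMeasurable
          (Filter.Eventually.of_forall (hif_bd t))
      have hint_u : ∀ (t : Fin 2) (Bt : Set ℝ), MeasurableSet Bt →
          Integrable (fun ω => (if T ω = t then (1:ℝ) else 0)
            * (Bt.indicator (fun _ => (1:ℝ)) (X ω) * u (C ω, X ω, t))) P := by
        intro t Bt hBt
        have hψb : ∀ ω, ‖Bt.indicator (fun _ => (1:ℝ)) (X ω)‖ ≤ 1 := by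
          intro ω; by_cases h : X ω ∈ Bt <;> simp [Set.indicator_apply, h]
        have inner : Integrable
            (fun ω => Bt.indicator (fun _ => (1:ℝ)) (X ω) * u (C ω, X ω, t)) P :=
          (hv_intP t).bdd_mul ((measurable_const.indicator hBt).comp hX).aestronglyMeasurable
            (Filter.Eventually.of_forall hψb)
        exact inner.bdd_mul (hif_meas t).aestronglyMeasurable
          (Filter.Eventually.of_forall (hif_bd t))
      -- pointwise decompositions
      have hptg : ∀ ω, ((fun ω => (X ω, T ω)) ⁻¹' B).indicator (fun ω => g (X ω, T ω)) ω
          = (if T ω = 0 then (1:ℝ) else 0)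
              * (({x : ℝ | (x, (0:Fin 2)) ∈ B}).indicator (fun _ => (1:ℝ)) (X ω) * f 0 (X ω))
            + (if T ω = 1 then (1:ℝ) else 0)
              * (({x : ℝ | (x, (1:Fin 2)) ∈ B}).indicator (fun _ => (1:ℝ)) (X ω) * f 1 (X ω)) := by
        intro ω
        simp only [Set.indicator_apply, Set.mem_preimage, Set.mem_setOf_eq]
        rcases fin2_cases (T ω) with h | h <;> rw [h] <;>
          [by_cases hm : ((X ω, (0:Fin 2)) ∈ B); by_cases hm : ((X ω, (1:Fin 2)) ∈ B)] <;>
          simp [hm, hgdef]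
      have hptu : ∀ ω, ((fun ω => (X ω, T ω)) ⁻¹' B).indicator
            (fun ω => u (C ω, X ω, T ω)) ω
          = (if T ω = 0 then (1:ℝ) else 0)
              * (({x : ℝ | (x, (0:Fin 2)) ∈ B}).indicator (fun _ => (1:ℝ)) (X ω)
                * u (C ω, X ω, 0))
            + (if T ω = 1 then (1:ℝ) else 0)
              * (({x : ℝ | (x, (1:Fin 2)) ∈ B}).indicator (fun _ => (1:ℝ)) (X ω)
                * u (C ω, X ω, 1)) := by
        intro ω
        simp only [Set.indicator_apply, Set.mem_preimage, Set.mem_setOf_eq]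
        rcases fin2_cases (T ω) with h | h <;> rw [h] <;>
          [by_cases hm : ((X ω, (0:Fin 2)) ∈ B); by_cases hm : ((X ω, (1:Fin 2)) ∈ B)] <;>
          simp [hm]
      have hsCXT : MeasurableSet[(MeasurableSpace.comap (fun ω => (C ω, X ω, T ω)) inferInstance)] ((fun ω => (X ω, T ω)) ⁻¹' B) :=
        ⟨(fun q : 𝒞 × ℝ × Fin 2 => (q.2.1, q.2.2)) ⁻¹' B,
          ((measurable_fst.comp measurable_snd).prodMk
            (measurable_snd.comp measurable_snd)) hB, rfl⟩
      calc ∫ ω in (fun ω => (X ω, T ω)) ⁻¹' B, g (X ω, T ω) ∂P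
          = ∫ ω, ((fun ω => (X ω, T ω)) ⁻¹' B).indicator (fun ω => g (X ω, T ω)) ω ∂P :=
            (integral_indicator hAmeas).symm
        _ = ∫ ω, ((if T ω = 0 then (1:ℝ) else 0)
              * (({x : ℝ | (x, (0:Fin 2)) ∈ B}).indicator (fun _ => (1:ℝ)) (X ω) * f 0 (X ω))
            + (if T ω = 1 then (1:ℝ) else 0)
              * (({x : ℝ | (x, (1:Fin 2)) ∈ B}).indicator (fun _ => (1:ℝ)) (X ω)
                * f 1 (X ω))) ∂P := integral_congr_ae (Filter.Eventually.of_forall hptg)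
        _ = (∫ ω, (if T ω = 0 then (1:ℝ) else 0)
              * (({x : ℝ | (x, (0:Fin 2)) ∈ B}).indicator (fun _ => (1:ℝ)) (X ω)
                * f 0 (X ω)) ∂P)
            + ∫ ω, (if T ω = 1 then (1:ℝ) else 0)
              * (({x : ℝ | (x, (1:Fin 2)) ∈ B}).indicator (fun _ => (1:ℝ)) (X ω)
                * f 1 (X ω)) ∂P :=
            integral_add (hint_f 0 _ hB0) (hint_f 1 _ hB1)
        _ = (∫ ω, (if T ω = 0 then (1:ℝ) else 0)
              * (({x : ℝ | (x, (0:Fin 2)) ∈ B}).indicator (fun _ => (1:ℝ)) (X ω)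
                * u (C ω, X ω, 0)) ∂P)
            + ∫ ω, (if T ω = 1 then (1:ℝ) else 0)
              * (({x : ℝ | (x, (1:Fin 2)) ∈ B}).indicator (fun _ => (1:ℝ)) (X ω)
                * u (C ω, X ω, 1)) ∂P := by
            rw [star 0 _ hB0, star 1 _ hB1]
        _ = ∫ ω, ((if T ω = 0 then (1:ℝ) else 0)
              * (({x : ℝ | (x, (0:Fin 2)) ∈ B}).indicator (fun _ => (1:ℝ)) (X ω)
                * u (C ω, X ω, 0))
            + (if T ω = 1 then (1:ℝ) else 0)
              * (({x : ℝ | (x, (1:Fin 2)) ∈ B}).indicator (fun _ => (1:ℝ)) (X ω)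
                * u (C ω, X ω, 1))) ∂P :=
            (integral_add (hint_u 0 _ hB0) (hint_u 1 _ hB1)).symm
        _ = ∫ ω, ((fun ω => (X ω, T ω)) ⁻¹' B).indicator
              (fun ω => u (C ω, X ω, T ω)) ω ∂P :=
            (integral_congr_ae (Filter.Eventually.of_forall hptu)).symm
        _ = ∫ ω in (fun ω => (X ω, T ω)) ⁻¹' B, u (C ω, X ω, T ω) ∂P :=
            integral_indicator hAmeas
        _ = ∫ ω in (fun ω => (X ω, T ω)) ⁻¹' B, (P[Y | (MeasurableSpace.comap (fun ω => (C ω, X ω, T ω)) inferInstance)]) ω ∂P :=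
            setIntegral_congr_ae (hmCXT _ hsCXT) (h4bP.mono fun ω h _ => h)
        _ = ∫ ω in (fun ω => (X ω, T ω)) ⁻¹' B, Y ω ∂P :=
            setIntegral_condExp hmCXT hYintP hsCXT
    · exact ((hg_meas.comp (comap_measurable _)).stronglyMeasurable).aestronglyMeasurable
  refine ⟨g, hg_meas, fun P hP => key P (hPmem P hP) (hlaw P hP) (hYint P hP) (h4b P hP)
    (hsharp P hP)⟩
end

section
/- Let C, X, T, Y be random variables on a measurable space (Ω, 𝓕) with C valued in a standard Borel space, X in ℝ, T in {0,1}, Y in ℝ, and let P₀, P₁, Pₛ be probability measures with P₀(T=0)=1, P₁(T=1)=1, Y integrable under each, and let x₀ ∈ ℝ. Assume the sharp design adherence condition Pₛ(T = 1_{X ≥ x₀}) = 1. Let g : ℝ×{0,1} → ℝ be measurable such that g(X, T) is a version of E_{P_σ}[Y | σ(X, T)] simultaneously for every σ ∈ {0, 1, s}, and define m(x) := g(x, 1_{x ≥ x₀}). Then m(X) is a version of E_{Pₛ}[Y | σ(X)], and if g(x₀+ε, 1) → g(x₀, 1) and g(x₀−ε, 0) → g(x₀, 0) as ε ↓ 0,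 then the average causal effect at the threshold, ACE_{x₀} := g(x₀, 1) − g(x₀, 0), satisfies ACE_{x₀} = lim_{ε↓0} [m(x₀+ε) − m(x₀−ε)], i.e. ACE_{x₀} is identified as the limit of the difference of observational regressions of Y on X on either side of the threshold. -/
open MeasureTheory Filter Topology

/-- Theorem 4.7, sharp RDD: under the sharp adherence condition
`Pₛ(T = 1_{X ≥ x₀}) = 1`, if `g(X, T)` is simultaneously a version of `E_{P_σ}[Y | σ(X, T)]`
in all regimes and `m(x) := g(x, 1_{x ≥ x₀})`, then `m(X)` is a version of `E_{Pₛ}[Y | σ(X)]`,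
and under one-sided continuity of `g` at `x₀`,
`ACE_{x₀} = g(x₀, 1) − g(x₀, 0) = lim_{ε↓0} [m(x₀+ε) − m(x₀−ε)]`. -/
theorem sharp_rdd_ACE_identification_threshold_indicator
    {Ω 𝒞 : Type*} [MeasurableSpace Ω] [MeasurableSpace 𝒞] [StandardBorelSpace 𝒞]
    (C : Ω → 𝒞) (X : Ω → ℝ) (T : Ω → Fin 2) (Y : Ω → ℝ)
    (hC : Measurable C) (hX : Measurable X) (hT : Measurable T) (hY : Measurable Y)
    (P₀ P₁ Ps : Measure Ω)
    [IsProbabilityMeasure P₀] [IsProbabilityMeasure P₁] [IsProbabilityMeasure Ps]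
    (hT0 : P₀ {ω | T ω = 0} = 1) (hT1 : P₁ {ω | T ω = 1} = 1)
    (hYint : ∀ P ∈ ({P₀, P₁, Ps} : Set (Measure Ω)), Integrable Y P)
    (x₀ : ℝ)
    -- sharp design adherence: Pₛ(T = 1_{X ≥ x₀}) = 1
    (hadh : Ps {ω | T ω = if x₀ ≤ X ω then (1 : Fin 2) else 0} = 1)
    (g : ℝ × Fin 2 → ℝ) (hg_meas : Measurable g)
    (hg : ∀ P ∈ ({P₀, P₁, Ps} : Set (Measure Ω)),
      (fun ω => g (X ω, T ω)) =ᵐ[P]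
        P[Y | MeasurableSpace.comap (fun ω => (X ω, T ω)) inferInstance])
    -- m(x) := g(x, 1_{x ≥ x₀})
    (m : ℝ → ℝ) (hm : ∀ x, m x = g (x, if x₀ ≤ x then 1 else 0)) :
    -- m(X) is a version of the observational regression E_{Pₛ}[Y | σ(X)]
    ((fun ω => m (X ω)) =ᵐ[Ps] Ps[Y | MeasurableSpace.comap X inferInstance]) ∧
    -- and under one-sided continuity at x₀, ACE_{x₀} is identified from Pₛ
    ((Tendsto (fun ε => g (x₀ + ε, 1)) (𝓝[>] (0 : ℝ)) (𝓝 (g (x₀, 1))) ∧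
      Tendsto (fun ε => g (x₀ - ε, 0)) (𝓝[>] (0 : ℝ)) (𝓝 (g (x₀, 0)))) →
      Tendsto (fun ε => m (x₀ + ε) - m (x₀ - ε)) (𝓝[>] (0 : ℝ))
        (𝓝 (g (x₀, 1) - g (x₀, 0)))) := by
  have hm_meas : Measurable m := by
    have : Measurable fun x : ℝ => (x, if x₀ ≤ x then (1 : Fin 2) else 0) :=
      measurable_id.prodMk (Measurable.ite (measurableSet_le measurable_const measurable_id)
        measurable_const measurable_const)
    have := hg_meas.comp this
    simpa [funext hm, Function.comp_def] using this
  -- a.e. equality g(X,T) = m(X) under Ps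
  have hadh_ae : ∀ᵐ ω ∂Ps, T ω = if x₀ ≤ X ω then (1 : Fin 2) else 0 := by
    have hmeas : MeasurableSet {ω | T ω = if x₀ ≤ X ω then (1 : Fin 2) else 0} :=
      measurableSet_eq_fun hT (Measurable.ite (measurableSet_le measurable_const hX)
        measurable_const measurable_const)
    rw [ae_iff]
    have hc : Ps {ω | T ω = if x₀ ≤ X ω then (1 : Fin 2) else 0}ᶜ
        = 1 - Ps {ω | T ω = if x₀ ≤ X ω then (1 : Fin 2) else 0} := by
      rw [measure_compl hmeas (measure_ne_top _ _), measure_univ]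
    rw [show {a | ¬T a = if x₀ ≤ X a then (1 : Fin 2) else 0}
      = {ω | T ω = if x₀ ≤ X ω then (1 : Fin 2) else 0}ᶜ from rfl, hc, hadh]
    simp
  have hEq : (fun ω => g (X ω, T ω)) =ᵐ[Ps] fun ω => m (X ω) := by
    filter_upwards [hadh_ae] with ω hω
    rw [hm, hω]
  -- sub-σ-algebra facts
  have hXT_meas : Measurable fun ω => (X ω, T ω) := hX.prodMk hT
  have hle2 : MeasurableSpace.comap (fun ω => (X ω, T ω)) inferInstance
      ≤ (inferInstance : MeasurableSpace Ω) := hXT_meas.comap_le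
  have hle1 : MeasurableSpace.comap X (inferInstance : MeasurableSpace ℝ)
      ≤ MeasurableSpace.comap (fun ω => (X ω, T ω)) inferInstance := by
    have h : X = Prod.fst ∘ fun ω => (X ω, T ω) := rfl
    rw [h, ← MeasurableSpace.comap_comp]
    exact MeasurableSpace.comap_mono measurable_fst.comap_le
  have hleX : MeasurableSpace.comap X (inferInstance : MeasurableSpace ℝ)
      ≤ (inferInstance : MeasurableSpace Ω) := hle1.trans hle2
  have hgPs : (fun ω => g (X ω, T ω)) =ᵐ[Ps]
      Ps[Y | MeasurableSpace.comap (fun ω => (X ω, T ω)) inferInstance] := hg Ps (by simp)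
  have hX_mX : @Measurable Ω ℝ (MeasurableSpace.comap X inferInstance) _ X :=
    fun s hs => ⟨s, hs, rfl⟩
  have hmX_sm : StronglyMeasurable[MeasurableSpace.comap X inferInstance]
      fun ω => m (X ω) := (hm_meas.comp hX_mX).stronglyMeasurable
  have hint : Integrable (fun ω => m (X ω)) Ps :=
    (integrable_condExp.congr hgPs.symm).congr hEq
  constructor
  · -- tower property chain
    have h1 : Ps[Y | MeasurableSpace.comap X inferInstance] =ᵐ[Ps]
        Ps[Ps[Y | MeasurableSpace.comap (fun ω => (X ω, T ω)) inferInstance] |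
          MeasurableSpace.comap X inferInstance] :=
      (condExp_condExp_of_le hle1 hle2).symm
    have h2 : Ps[Ps[Y | MeasurableSpace.comap (fun ω => (X ω, T ω)) inferInstance] |
          MeasurableSpace.comap X inferInstance] =ᵐ[Ps]
        Ps[(fun ω => g (X ω, T ω)) | MeasurableSpace.comap X inferInstance] :=
      condExp_congr_ae hgPs.symm
    have h3 : Ps[(fun ω => g (X ω, T ω)) | MeasurableSpace.comap X inferInstance] =ᵐ[Ps]
        Ps[(fun ω => m (X ω)) | MeasurableSpace.comap X inferInstance] :=
      condExp_congr_ae hEq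
    have h4 : Ps[(fun ω => m (X ω)) | MeasurableSpace.comap X inferInstance]
        = fun ω => m (X ω) := condExp_of_stronglyMeasurable hleX hmX_sm hint
    calc (fun ω => m (X ω))
        = Ps[(fun ω => m (X ω)) | MeasurableSpace.comap X inferInstance] := h4.symm
      _ =ᵐ[Ps] Ps[Y | MeasurableSpace.comap X inferInstance] :=
          (h1.trans (h2.trans h3)).symm
  · rintro ⟨h₁, h₂⟩
    have e₁ : (fun ε => m (x₀ + ε)) =ᶠ[𝓝[>] (0 : ℝ)] fun ε => g (x₀ + ε, 1) := by
      filter_upwards [self_mem_nhdsWithin] with ε (hε : 0 < ε)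
      rw [hm, if_pos (by linarith)]
    have e₂ : (fun ε => m (x₀ - ε)) =ᶠ[𝓝[>] (0 : ℝ)] fun ε => g (x₀ - ε, 0) := by
      filter_upwards [self_mem_nhdsWithin] with ε (hε : 0 < ε)
      rw [hm, if_neg (by linarith)]
    exact ((h₁.congr' e₁.symm).sub (h₂.congr' e₂.symm))
end

section
/- Let C, X, T, Y be random variables on a measurable space (Ω, 𝓕) with C valued in a standard Borel space 𝒞, X in ℝ, T in {0,1}, Y in ℝ, and let P₀, P₁, P_f be probability measures with P₀(T=0)=1, P₁(T=1)=1 and Y integrable under each. Assume: (4a) the joint law of (C, X) is the same under P₀, P₁ and P_f; (4b) there exists a measurable u : 𝒞×ℝ×{0,1} → ℝ such that u(C, X, T) is a version of E_{P_σ}[Y | σ(C, X, T)] simultaneously for every σ ∈ {0, 1, f}; (positivity) there is a measurable p : 𝒞×ℝ → [0,1] such that p(C, X) is a version of E_{P_f}[1_{T=1} | σ(C, X)] and 0 < p(C, X) < 1 P_f-almost surely. Then for each t ∈ {0, 1}: for every measurable m_t : 𝒞×ℝ → ℝ such that m_t(C, X) is a version of E_{P_t}[Y | σ(C, X)], and every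 measurable k : 𝒞×ℝ×{0,1} → ℝ such that k(C, X, T) is a version of E_{P_f}[Y | σ(C, X, T)], one has m_t(C, X) = k(C, X, t) almost surely under P_f (and likewise almost surely under P₀ and under P₁). -/
open MeasureTheory

/-- Theorem 4.10, fuzzy RDD: if `(C, X)` are strongly sufficient covariates,
then for each `t ∈ {0, 1}`, any version `m_t(C, X)` of `E_{P_t}[Y | σ(C, X)]` and any version
`k(C, X, T)` of `E_{P_f}[Y | σ(C, X, T)]` satisfy `m_t(C, X) = k(C, X, t)` almost surely in
every regime (in particular under `P_f`). -/
theorem fuzzy_rdd_interventional_regression_eq_observational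
    {Ω 𝒞 : Type*} [MeasurableSpace Ω] [MeasurableSpace 𝒞] [StandardBorelSpace 𝒞]
    (C : Ω → 𝒞) (X : Ω → ℝ) (T : Ω → Fin 2) (Y : Ω → ℝ)
    (hC : Measurable C) (hX : Measurable X) (hT : Measurable T) (hY : Measurable Y)
    (P₀ P₁ Pf : Measure Ω)
    [IsProbabilityMeasure P₀] [IsProbabilityMeasure P₁] [IsProbabilityMeasure Pf]
    (hT0 : P₀ {ω | T ω = 0} = 1) (hT1 : P₁ {ω | T ω = 1} = 1)
    (hYint : ∀ P ∈ ({P₀, P₁, Pf} : Set (Measure Ω)), Integrable Y P)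
    -- (4a): the joint law of (C, X) is the same in all three regimes
    (h4a : Measure.map (fun ω => (C ω, X ω)) P₀ = Measure.map (fun ω => (C ω, X ω)) P₁ ∧
           Measure.map (fun ω => (C ω, X ω)) P₀ = Measure.map (fun ω => (C ω, X ω)) Pf)
    -- (4b): a single measurable u(C, X, T) is a version of E_{P_σ}[Y | σ(C, X, T)] in all regimes
    (u : 𝒞 × ℝ × Fin 2 → ℝ) (hu_meas : Measurable u)
    (h4b : ∀ P ∈ ({P₀, P₁, Pf} : Set (Measure Ω)),
      (fun ω => u (C ω, X ω, T ω)) =ᵐ[P]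
        P[Y | MeasurableSpace.comap (fun ω => (C ω, X ω, T ω)) inferInstance])
    -- positivity: p(C, X) is a version of E_{P_f}[1_{T=1} | σ(C, X)] with 0 < p(C, X) < 1 a.s.
    (p : 𝒞 × ℝ → ℝ) (hp_meas : Measurable p) (hp_range : ∀ z, p z ∈ Set.Icc (0 : ℝ) 1)
    (hp_ver : (fun ω => p (C ω, X ω)) =ᵐ[Pf]
      Pf[(fun ω => if T ω = 1 then (1 : ℝ) else 0) |
        MeasurableSpace.comap (fun ω => (C ω, X ω)) inferInstance])
    (hp_pos : ∀ᵐ ω ∂Pf, 0 < p (C ω, X ω) ∧ p (C ω, X ω) < 1) :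
    ∀ t : Fin 2, ∀ mt : 𝒞 × ℝ → ℝ, Measurable mt →
      ((fun ω => mt (C ω, X ω)) =ᵐ[if t = 0 then P₀ else P₁]
        (if t = 0 then P₀ else P₁)[Y | MeasurableSpace.comap (fun ω => (C ω, X ω)) inferInstance]) →
      ∀ k : 𝒞 × ℝ × Fin 2 → ℝ, Measurable k →
        ((fun ω => k (C ω, X ω, T ω)) =ᵐ[Pf]
          Pf[Y | MeasurableSpace.comap (fun ω => (C ω, X ω, T ω)) inferInstance]) →
        ∀ P ∈ ({P₀, P₁, Pf} : Set (Measure Ω)),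
          (fun ω => mt (C ω, X ω)) =ᵐ[P] (fun ω => k (C ω, X ω, t)) := by
  intro t mt hmt_meas hmt k hk_meas hk
  have ht01 : t = 0 ∨ t = 1 := by omega
  set S : Set (Measure Ω) := {P₀, P₁, Pf} with hS
  have hCX : Measurable fun ω => (C ω, X ω) := hC.prodMk hX
  have hCXT : Measurable fun ω => (C ω, X ω, T ω) := hC.prodMk (hX.prodMk hT)
  have hm2 := measurable_iff_comap_le.mp hCX
  have hm3 := measurable_iff_comap_le.mp hCXT
  have h23 : (MeasurableSpace.comap (fun ω => (C ω, X ω)) inferInstance) ≤ (MeasurableSpace.comap (fun ω => (C ω, X ω, T ω)) inferInstance) := by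
    rintro s ⟨B, hB, rfl⟩
    exact ⟨(fun z : 𝒞 × ℝ × Fin 2 => (z.1, z.2.1)) ⁻¹' B,
      (measurable_fst.prodMk (measurable_fst.comp measurable_snd)) hB, rfl⟩
  -- measurability w.r.t. (MeasurableSpace.comap (fun ω => (C ω, X ω)) inferInstance)
  have hCX2 : Measurable[MeasurableSpace.comap (fun ω => (C ω, X ω)) inferInstance]
      fun ω => (C ω, X ω) :=
    @measurable_iff_comap_le Ω (𝒞 × ℝ)
      (MeasurableSpace.comap (fun ω => (C ω, X ω)) inferInstance) _ _ |>.mpr le_rfl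
  have hmeas2 : ∀ g : 𝒞 × ℝ → ℝ, Measurable g →
      StronglyMeasurable[(MeasurableSpace.comap (fun ω => (C ω, X ω)) inferInstance)] fun ω => g (C ω, X ω) := fun g hg =>
    (hg.comp hCX2).stronglyMeasurable
  -- the common law of (C, X)
  have hmapeq : ∀ P ∈ S, Measure.map (fun ω => (C ω, X ω)) P =
      Measure.map (fun ω => (C ω, X ω)) P₀ := by
    rintro P hP
    simp only [hS, Set.mem_insert_iff, Set.mem_singleton_iff] at hP
    rcases hP with rfl | rfl | rfl
    · rfl
    · exact h4a.1.symm
    · exact h4a.2.symm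
  -- transfer of a.e. equalities between regimes
  have trans_ae : ∀ g h : 𝒞 × ℝ → ℝ, Measurable g → Measurable h → ∀ Q ∈ S,
      ((fun ω => g (C ω, X ω)) =ᵐ[Q] fun ω => h (C ω, X ω)) → ∀ P ∈ S,
      (fun ω => g (C ω, X ω)) =ᵐ[P] fun ω => h (C ω, X ω) := by
    intro g h hg hh Q hQ hgh P hP
    have hB : MeasurableSet {z : 𝒞 × ℝ | ¬ g z = h z} := (measurableSet_eq_fun hg hh).compl
    have h0 : Measure.map (fun ω => (C ω, X ω)) Q {z : 𝒞 × ℝ | ¬ g z = h z} = 0 := by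
      rw [Measure.map_apply hCX hB]
      exact ae_iff.mp hgh
    have : P ((fun ω => (C ω, X ω)) ⁻¹' {z : 𝒞 × ℝ | ¬ g z = h z}) = 0 := by
      rw [← Measure.map_apply hCX hB, hmapeq P hP, ← hmapeq Q hQ]
      exact h0
    exact ae_iff.mpr this
  -- set up the interventional regime P_t
  set Pt : Measure Ω := if t = 0 then P₀ else P₁ with hPt
  have hPtProb : IsProbabilityMeasure Pt := by
    rcases ht01 with rfl | rfl
    · rw [hPt, if_pos rfl]; infer_instance
    · rw [hPt, if_neg (by decide)]; infer_instance
  have hPt_mem : Pt ∈ S := by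
    rcases ht01 with rfl | rfl <;> simp [hPt, hS]
  have hPf_mem : Pf ∈ S := by simp [hS]
  -- T = t a.s. under Pt
  have hTt : ∀ᵐ ω ∂Pt, T ω = t := by
    have key : ∀ (P : Measure Ω) [IsProbabilityMeasure P] (s : Fin 2),
        P {ω | T ω = s} = 1 → ∀ᵐ ω ∂P, T ω = s := by
      intro P hPp s h
      have hm : MeasurableSet {ω | T ω = s} := hT (measurableSet_singleton s)
      have hc := measure_compl hm (measure_ne_top P _)
      rw [h, measure_univ, tsub_self] at hc
      rw [Filter.Eventually, mem_ae_iff]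
      exact hc
    rcases ht01 with rfl | rfl
    · simpa [hPt] using key P₀ 0 hT0
    · simpa [hPt] using key P₁ 1 hT1
  -- Step A : mt (C, X) = u (C, X, t) a.e. under Pt
  have ha1 : (fun ω => u (C ω, X ω, t)) =ᵐ[Pt] fun ω => u (C ω, X ω, T ω) :=
    hTt.mono fun ω h => by simp only [h]
  have hu3 : (fun ω => u (C ω, X ω, T ω)) =ᵐ[Pt] Pt[Y | (MeasurableSpace.comap (fun ω => (C ω, X ω, T ω)) inferInstance)] := h4b Pt hPt_mem
  have hut : (fun ω => u (C ω, X ω, t)) =ᵐ[Pt] Pt[Y | (MeasurableSpace.comap (fun ω => (C ω, X ω, T ω)) inferInstance)] := ha1.trans hu3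
  have hut_int : Integrable (fun ω => u (C ω, X ω, t)) Pt :=
    integrable_condExp.congr hut.symm
  have hcond2 : Pt[Y | (MeasurableSpace.comap (fun ω => (C ω, X ω)) inferInstance)] =ᵐ[Pt] fun ω => u (C ω, X ω, t) := by
    calc Pt[Y | (MeasurableSpace.comap (fun ω => (C ω, X ω)) inferInstance)] =ᵐ[Pt] Pt[Pt[Y | (MeasurableSpace.comap (fun ω => (C ω, X ω, T ω)) inferInstance)] | (MeasurableSpace.comap (fun ω => (C ω, X ω)) inferInstance)] := (condExp_condExp_of_le h23 hm3).symm
      _ =ᵐ[Pt] Pt[(fun ω => u (C ω, X ω, t)) | (MeasurableSpace.comap (fun ω => (C ω, X ω)) inferInstance)] := condExp_congr_ae hut.symm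
      _ = fun ω => u (C ω, X ω, t) := condExp_of_stronglyMeasurable hm2
          (hmeas2 _ (hu_meas.comp (measurable_fst.prodMk
            (measurable_snd.prodMk measurable_const)))) hut_int
  have hA : (fun ω => mt (C ω, X ω)) =ᵐ[Pt] fun ω => u (C ω, X ω, t) :=
    hmt.trans hcond2
  -- Step B : k (C, X, t) = u (C, X, t) a.e. under Pf
  have hkequ : (fun ω => k (C ω, X ω, T ω)) =ᵐ[Pf] fun ω => u (C ω, X ω, T ω) :=
    hk.trans (h4b Pf hPf_mem).symm
  have hN : Pf {ω | ¬ k (C ω, X ω, T ω) = u (C ω, X ω, T ω)} = 0 := ae_iff.mp hkequ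
  -- the bad set on covariate space
  set A : Set (𝒞 × ℝ) := {z | ¬ k (z.1, z.2, t) = u (z.1, z.2, t)} with hAdef
  have hπ : Measurable fun z : 𝒞 × ℝ => (z.1, z.2, t) :=
    measurable_fst.prodMk (measurable_snd.prodMk measurable_const)
  have hA_meas : MeasurableSet A :=
    (measurableSet_eq_fun (hk_meas.comp hπ) (hu_meas.comp hπ)).compl
  set S' : Set Ω := (fun ω => (C ω, X ω)) ⁻¹' A with hS'def
  have hS'_m2 : MeasurableSet[(MeasurableSpace.comap (fun ω => (C ω, X ω)) inferInstance)] S' := ⟨A, hA_meas, rfl⟩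
  have hS'_meas : MeasurableSet S' := hm2 _ hS'_m2
  -- a version q of E_{P_f}[1_{T = t} | (MeasurableSpace.comap (fun ω => (C ω, X ω)) inferInstance)] with q > 0 a.e. and bounded
  obtain ⟨q, hq_meas, hq_ver, hq_pos, hq_bd⟩ :
      ∃ q : 𝒞 × ℝ → ℝ, Measurable q ∧
        ((fun ω => q (C ω, X ω)) =ᵐ[Pf]
          Pf[(fun ω => if T ω = t then (1 : ℝ) else 0) | (MeasurableSpace.comap (fun ω => (C ω, X ω)) inferInstance)]) ∧
        (∀ᵐ ω ∂Pf, 0 < q (C ω, X ω)) ∧ (∀ z, ‖q z‖ ≤ 1) := by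
    have hf1_int : Integrable (fun ω => if T ω = 1 then (1 : ℝ) else 0) Pf := by
      refine (integrable_const (1 : ℝ)).mono'
        ((Measurable.ite (hT (measurableSet_singleton 1)) measurable_const
          measurable_const).aestronglyMeasurable) ?_
      filter_upwards with ω
      by_cases h : T ω = 1 <;> simp [h]
    rcases ht01 with rfl | rfl
    · refine ⟨fun z => 1 - p z, measurable_const.sub hp_meas, ?_,
        hp_pos.mono fun ω h => by show (0:ℝ) < 1 - p (C ω, X ω); linarith [h.2], fun z => ?_⟩
      · have hfe : (fun ω => if T ω = (0 : Fin 2) then (1 : ℝ) else 0)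
            = fun ω => (fun _ : Ω => (1 : ℝ)) ω -
              (fun ω => if T ω = (1 : Fin 2) then (1 : ℝ) else 0) ω := by
          funext ω
          have : T ω = 0 ∨ T ω = 1 := by omega
          rcases this with h | h <;> simp [h]
        have h1 : Pf[(fun ω => if T ω = (0 : Fin 2) then (1 : ℝ) else 0) | (MeasurableSpace.comap (fun ω => (C ω, X ω)) inferInstance)]
            =ᵐ[Pf] Pf[(fun _ : Ω => (1 : ℝ)) | (MeasurableSpace.comap (fun ω => (C ω, X ω)) inferInstance)] -
              Pf[(fun ω => if T ω = (1 : Fin 2) then (1 : ℝ) else 0) | (MeasurableSpace.comap (fun ω => (C ω, X ω)) inferInstance)] := by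
          rw [hfe]
          exact condExp_sub (integrable_const 1) hf1_int _
        have h2 : Pf[(fun _ : Ω => (1 : ℝ)) | (MeasurableSpace.comap (fun ω => (C ω, X ω)) inferInstance)] = fun _ => (1 : ℝ) :=
          condExp_const hm2 1
        filter_upwards [h1, hp_ver] with ω h1ω h2ω
        rw [h1ω, Pi.sub_apply, h2, ← h2ω]
      · have h := Set.mem_Icc.mp (hp_range z)
        show ‖1 - p z‖ ≤ 1
        rw [Real.norm_eq_abs, abs_le]
        exact ⟨by linarith [h.2], by linarith [h.1]⟩
    · exact ⟨p, hp_meas, hp_ver, hp_pos.mono fun ω h => h.1, fun z => by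
        have h := Set.mem_Icc.mp (hp_range z)
        rw [Real.norm_eq_abs, abs_le]
        exact ⟨by linarith [h.1], by linarith [h.2]⟩⟩
  -- the indicator of {T = t} vanishes a.e. on S'
  have hind_int : Integrable (fun ω => if T ω = t then (1 : ℝ) else 0) Pf := by
    refine (integrable_const (1 : ℝ)).mono'
      ((Measurable.ite (hT (measurableSet_singleton t)) measurable_const
        measurable_const).aestronglyMeasurable) ?_
    filter_upwards with ω
    by_cases h : T ω = t <;> simp [h]
  have hzero1 : (fun ω => if T ω = t then (1 : ℝ) else 0) =ᵐ[Pf.restrict S'] 0 := by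
    rw [Filter.EventuallyEq, ae_iff, Measure.restrict_apply' hS'_meas]
    refine measure_mono_null ?_ hN
    intro ω hω
    obtain ⟨h1, h2⟩ := hω
    have hTω : T ω = t := by
      by_contra h
      simp [h] at h1
    simp only [Set.mem_setOf_eq]
    rw [hTω]
    exact h2
  have hint0 : ∫ ω in S', (if T ω = t then (1 : ℝ) else 0) ∂Pf = 0 :=
    integral_eq_zero_of_ae hzero1
  have hqint0 : ∫ ω in S', q (C ω, X ω) ∂Pf = 0 := by
    rw [setIntegral_congr_ae hS'_meas (hq_ver.mono fun ω h _ => h),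
      setIntegral_condExp hm2 hind_int hS'_m2]
    exact hint0
  have hq_zero : (fun ω => q (C ω, X ω)) =ᵐ[Pf.restrict S'] 0 := by
    refine (setIntegral_eq_zero_iff_of_nonneg_ae ?_ ?_).mp hqint0
    · exact ae_restrict_of_ae (hq_pos.mono fun ω h => le_of_lt h)
    · exact (Integrable.mono' (integrable_const (1 : ℝ))
        ((hq_meas.comp hCX).aestronglyMeasurable)
        (Filter.Eventually.of_forall fun ω => hq_bd _)).integrableOn
  have hS'0 : Pf S' = 0 := by
    have hfalse : ∀ᵐ ω ∂Pf.restrict S', False := by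
      filter_upwards [hq_zero, ae_restrict_of_ae hq_pos] with ω h1 h2
      rw [Pi.zero_apply] at h1
      rw [h1] at h2
      exact lt_irrefl 0 h2
    have := ae_iff.mp hfalse
    simpa using this
  have hB : (fun ω => k (C ω, X ω, t)) =ᵐ[Pf] fun ω => u (C ω, X ω, t) := by
    rw [Filter.EventuallyEq, ae_iff]
    exact hS'0
  -- combine via the common law of (C, X)
  have hA' := trans_ae (fun z => mt z) (fun z => u (z.1, z.2, t)) hmt_meas
    (hu_meas.comp hπ) Pt hPt_mem hA
  have hB' := trans_ae (fun z => k (z.1, z.2, t)) (fun z => u (z.1, z.2, t))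
    (hk_meas.comp hπ) (hu_meas.comp hπ) Pf hPf_mem hB
  intro P hP
  exact (hA' P hP).trans (hB' P hP).symm
end

section
/- Let C, X, T, Y be random variables on a measurable space (Ω, 𝓕) with C valued in a standard Borel space 𝒞, X in ℝ, T in {0,1}, Y in ℝ, and let P₀, P₁, P_f be probability measures with P₀(T=0)=1, P₁(T=1)=1, Y integrable under each, and suppose (C, X) are strongly sufficient covariates: the joint law of (C, X) is the same under P₀, P₁, P_f; some measurable u(C, X, T) is simultaneously a version of E_{P_σ}[Y | σ(C, X, T)] for all σ ∈ {0, 1, f}; and P_f(T = t | C, X) > 0 a.s. for t = 0, 1. Let k : 𝒞×ℝ×{0,1} → ℝ be measurable with k(C, X, T) a version of E_{P_f}[Y | σ(C, X, T)], for t ∈ {0,1} let m_t : ℝ → ℝ be measurable with m_t(X) a version of E_{P_t}[Y | σ(X)], and let r : ℝ → ℝ be measurable with r(X) a version of E_{P_f}[k(C, X, 1) − k(C, X, 0) | σ(X)]. Then m₁(X) − m₀(X) = r(X) almost surely under P_f; that is, the average causal effect function x ↦ E₁(Y | X = x) − E₀(Y | X = x) is identified, P_f-almost everywhere in X, as the observational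 regression of k(C, X, 1) − k(C, X, 0) on X under P_f. -/
open MeasureTheory

/-- Transfer integrability of `g ∘ Z` between measures with equal pushforward under `Z`. -/
lemma my_integrable_comp_transfer {Ω α : Type*} [MeasurableSpace Ω] [MeasurableSpace α]
    {Z : Ω → α} (hZ : Measurable Z) {P Q : Measure Ω} (h : P.map Z = Q.map Z)
    {g : α → ℝ} (hg : Measurable g) (hi : Integrable (fun ω => g (Z ω)) P) :
    Integrable (fun ω => g (Z ω)) Q := by
  have h1 : Integrable g (P.map Z) :=
    (integrable_map_measure hg.aestronglyMeasurable hZ.aemeasurable).2 hi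
  rw [h] at h1
  exact (integrable_map_measure hg.aestronglyMeasurable hZ.aemeasurable).1 h1

/-- Transfer set integrals of `g ∘ Z` between measures with equal pushforward under `Z`. -/
lemma my_setIntegral_comp_transfer {Ω α : Type*} [MeasurableSpace Ω] [MeasurableSpace α]
    {Z : Ω → α} (hZ : Measurable Z) {P Q : Measure Ω} (h : P.map Z = Q.map Z)
    {g : α → ℝ} (hg : Measurable g) {B : Set α} (hB : MeasurableSet B) :
    ∫ ω in Z ⁻¹' B, g (Z ω) ∂P = ∫ ω in Z ⁻¹' B, g (Z ω) ∂Q := by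
  rw [← setIntegral_map hB hg.aestronglyMeasurable hZ.aemeasurable,
    ← setIntegral_map hB hg.aestronglyMeasurable hZ.aemeasurable, h]

/-- If essentially positive `q` is a version of `μ[f|comap Z]` and `∫_{Z⁻¹A} f = 0`,
then `μ (Z⁻¹' A) = 0`. -/
lemma my_null_of_pos_version {Ω α : Type*} [MeasurableSpace Ω] [MeasurableSpace α]
    {Z : Ω → α} (hZ : Measurable Z) {μ : Measure Ω} [IsFiniteMeasure μ] {f q : Ω → ℝ}
    (hf_int : Integrable f μ)
    (hq : q =ᵐ[μ] μ[f | MeasurableSpace.comap Z inferInstance])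
    (hq_pos : ∀ᵐ ω ∂μ, 0 < q ω) (hq_int : Integrable q μ) {A : Set α}
    (hA : MeasurableSet A) (hfS : ∫ ω in Z ⁻¹' A, f ω ∂μ = 0) : μ (Z ⁻¹' A) = 0 := by
  have hS : MeasurableSet[MeasurableSpace.comap Z inferInstance] (Z ⁻¹' A) := ⟨A, hA, rfl⟩
  have h1 : ∫ ω in Z ⁻¹' A, q ω ∂μ = 0 := by
    have e2 : ∫ ω in Z ⁻¹' A, (μ[f | MeasurableSpace.comap Z inferInstance]) ω ∂μ
        = ∫ ω in Z ⁻¹' A, f ω ∂μ := setIntegral_condExp hZ.comap_le hf_int hS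
    rw [integral_congr_ae (ae_restrict_of_ae hq), e2, hfS]
  have h2 : q =ᵐ[μ.restrict (Z ⁻¹' A)] 0 := by
    have hnn : 0 ≤ᵐ[μ.restrict (Z ⁻¹' A)] q := ae_restrict_of_ae (hq_pos.mono fun ω h => h.le)
    have hio : Integrable q (μ.restrict (Z ⁻¹' A)) := hq_int.integrableOn
    exact (integral_eq_zero_iff_of_nonneg_ae hnn hio).1 h1
  have h3 : ∀ᵐ ω ∂μ.restrict (Z ⁻¹' A), False :=
    (ae_restrict_of_ae hq_pos).mp (h2.mono fun ω h0 hpos => by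
      rw [Pi.zero_apply] at h0; rw [h0] at hpos; exact lt_irrefl 0 hpos)
  have h4 := ae_iff.1 h3
  simpa [Measure.restrict_apply_univ] using h4

/-- Theorem 4.11, fuzzy RDD: with `(C, X)` strongly sufficient covariates,
`k(C, X, T)` a version of `E_{P_f}[Y | σ(C, X, T)]`, `m_t(X)` a version of `E_{P_t}[Y | σ(X)]`
for `t = 0, 1`, and `r(X)` a version of `E_{P_f}[k(C, X, 1) − k(C, X, 0) | σ(X)]`, one has
`m₁(X) − m₀(X) = r(X)` `P_f`-almost surely: the ACE function is identified from `P_f`. -/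
theorem fuzzy_rdd_ACE_identification
    {Ω 𝒞 : Type*} [MeasurableSpace Ω] [MeasurableSpace 𝒞] [StandardBorelSpace 𝒞]
    (C : Ω → 𝒞) (X : Ω → ℝ) (T : Ω → Fin 2) (Y : Ω → ℝ)
    (hC : Measurable C) (hX : Measurable X) (hT : Measurable T) (hY : Measurable Y)
    (P₀ P₁ Pf : Measure Ω)
    [IsProbabilityMeasure P₀] [IsProbabilityMeasure P₁] [IsProbabilityMeasure Pf]
    (hT0 : P₀ {ω | T ω = 0} = 1) (hT1 : P₁ {ω | T ω = 1} = 1)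
    (hYint : ∀ P ∈ ({P₀, P₁, Pf} : Set (Measure Ω)), Integrable Y P)
    -- strongly sufficient covariates:
    (h4a : Measure.map (fun ω => (C ω, X ω)) P₀ = Measure.map (fun ω => (C ω, X ω)) P₁ ∧
           Measure.map (fun ω => (C ω, X ω)) P₀ = Measure.map (fun ω => (C ω, X ω)) Pf)
    (u : 𝒞 × ℝ × Fin 2 → ℝ) (hu_meas : Measurable u)
    (h4b : ∀ P ∈ ({P₀, P₁, Pf} : Set (Measure Ω)),
      (fun ω => u (C ω, X ω, T ω)) =ᵐ[P]
        P[Y | MeasurableSpace.comap (fun ω => (C ω, X ω, T ω)) inferInstance])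
    (p : 𝒞 × ℝ → ℝ) (hp_meas : Measurable p) (hp_range : ∀ z, p z ∈ Set.Icc (0 : ℝ) 1)
    (hp_ver : (fun ω => p (C ω, X ω)) =ᵐ[Pf]
      Pf[(fun ω => if T ω = 1 then (1 : ℝ) else 0) |
        MeasurableSpace.comap (fun ω => (C ω, X ω)) inferInstance])
    (hp_pos : ∀ᵐ ω ∂Pf, 0 < p (C ω, X ω) ∧ p (C ω, X ω) < 1)
    -- k(C, X, T) is a version of E_{P_f}[Y | σ(C, X, T)]
    (k : 𝒞 × ℝ × Fin 2 → ℝ) (hk_meas : Measurable k)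
    (hk : (fun ω => k (C ω, X ω, T ω)) =ᵐ[Pf]
      Pf[Y | MeasurableSpace.comap (fun ω => (C ω, X ω, T ω)) inferInstance])
    -- m_t(X) is a version of E_{P_t}[Y | σ(X)] for t = 0, 1
    (m₀ m₁ : ℝ → ℝ) (hm₀_meas : Measurable m₀) (hm₁_meas : Measurable m₁)
    (hm₀ : (fun ω => m₀ (X ω)) =ᵐ[P₀] P₀[Y | MeasurableSpace.comap X inferInstance])
    (hm₁ : (fun ω => m₁ (X ω)) =ᵐ[P₁] P₁[Y | MeasurableSpace.comap X inferInstance])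
    -- r(X) is a version of E_{P_f}[k(C, X, 1) − k(C, X, 0) | σ(X)]
    (r : ℝ → ℝ) (hr_meas : Measurable r)
    (hr : (fun ω => r (X ω)) =ᵐ[Pf]
      Pf[(fun ω => k (C ω, X ω, 1) - k (C ω, X ω, 0)) |
        MeasurableSpace.comap X inferInstance]) :
    (fun ω => m₁ (X ω) - m₀ (X ω)) =ᵐ[Pf] (fun ω => r (X ω)) := by
  classical
  have hCX : Measurable fun ω => (C ω, X ω) := hC.prodMk hX
  have hCXT : Measurable fun ω => (C ω, X ω, T ω) := hC.prodMk (hX.prodMk hT)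
  have hmem₀ : P₀ ∈ ({P₀, P₁, Pf} : Set (Measure Ω)) := by simp
  have hmem₁ : P₁ ∈ ({P₀, P₁, Pf} : Set (Measure Ω)) := by simp
  have hmemf : Pf ∈ ({P₀, P₁, Pf} : Set (Measure Ω)) := by simp
  -- a.e. values of T in the interventional regimes
  have hTae : ∀ (P : Measure Ω) (t : Fin 2), IsProbabilityMeasure P → P {ω | T ω = t} = 1 →
      ∀ᵐ ω ∂P, T ω = t := by
    intro P t hP ht
    have hms : MeasurableSet {ω | T ω = t} := hT (measurableSet_singleton t)
    rw [ae_iff]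
    have h := measure_compl hms (measure_ne_top P _)
    rw [ht, measure_univ, tsub_self] at h
    simpa [Set.compl_setOf] using h
  have hT0ae : ∀ᵐ ω ∂P₀, T ω = 0 := hTae P₀ 0 inferInstance hT0
  have hT1ae : ∀ᵐ ω ∂P₁, T ω = 1 := hTae P₁ 1 inferInstance hT1
  -- k = u a.e. under Pf, composed with (C, X, T)
  have hku : (fun ω => k (C ω, X ω, T ω)) =ᵐ[Pf] fun ω => u (C ω, X ω, T ω) :=
    hk.trans (h4b Pf hmemf).symm
  -- indicator functions of {T = t} are integrable
  have hind_meas : ∀ t : Fin 2, Measurable fun ω => if T ω = t then (1 : ℝ) else 0 := by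
    intro t
    exact Measurable.ite (hT (measurableSet_singleton t)) measurable_const measurable_const
  have hind_int : ∀ t : Fin 2, Integrable (fun ω => if T ω = t then (1 : ℝ) else 0) Pf := by
    intro t
    refine (integrable_const (1 : ℝ)).mono' (hind_meas t).aestronglyMeasurable ?_
    filter_upwards with ω
    split_ifs <;> simp
  -- positive versions of the conditional probability of T = t given (C, X)
  have hver : ∀ t : Fin 2, ∃ q : 𝒞 × ℝ → ℝ, Measurable q ∧
      Integrable (fun ω => q (C ω, X ω)) Pf ∧
      ((fun ω => q (C ω, X ω)) =ᵐ[Pf]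
        Pf[(fun ω => if T ω = t then (1 : ℝ) else 0) |
          MeasurableSpace.comap (fun ω => (C ω, X ω)) inferInstance]) ∧
      (∀ᵐ ω ∂Pf, 0 < q (C ω, X ω)) := by
    intro t
    have hp_int : Integrable (fun ω => p (C ω, X ω)) Pf := by
      refine (integrable_const (1 : ℝ)).mono' (hp_meas.comp hCX).aestronglyMeasurable ?_
      filter_upwards with ω
      have := hp_range (C ω, X ω)
      rw [Set.mem_Icc] at this
      simp [abs_le]
      constructor <;> linarith [this.1, this.2]
    fin_cases t
    · refine ⟨fun z => 1 - p z, measurable_const.sub hp_meas, ?_, ?_, ?_⟩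
      · exact (integrable_const (1 : ℝ)).sub hp_int
      · have heq2 : (fun ω => if T ω = (0 : Fin 2) then (1 : ℝ) else 0)
            = (fun _ => (1 : ℝ)) - fun ω => if T ω = (1 : Fin 2) then (1 : ℝ) else 0 := by
          funext ω
          have h2 : T ω = 0 ∨ T ω = 1 := by omega
          rcases h2 with h | h <;> simp [h]
        show _ =ᵐ[Pf] Pf[(fun ω => if T ω = (0 : Fin 2) then (1 : ℝ) else 0) |
          MeasurableSpace.comap (fun ω => (C ω, X ω)) inferInstance]
        rw [heq2]
        have hsub := condExp_sub (μ := Pf)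
          (m := MeasurableSpace.comap (fun ω => (C ω, X ω)) inferInstance)
          (integrable_const (1 : ℝ)) (hind_int 1)
        have hc := condExp_const (μ := Pf) hCX.comap_le (1 : ℝ)
        filter_upwards [hsub, hp_ver] with ω h1 h2
        show 1 - p (C ω, X ω) = _
        rw [h1, Pi.sub_apply, hc, ← h2]
      · filter_upwards [hp_pos] with ω hω
        linarith [hω.2]
    · exact ⟨p, hp_meas, hp_int, hp_ver, hp_pos.mono fun ω h => h.1⟩
  -- k(·,·,t) = u(·,·,t) a.e. under Pf
  have hku' : ∀ t : Fin 2,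
      (fun ω => k (C ω, X ω, t)) =ᵐ[Pf] fun ω => u (C ω, X ω, t) := by
    intro t
    obtain ⟨q, hqm, hqint, hqver, hqpos⟩ := hver t
    set A : Set (𝒞 × ℝ) := {z | ¬ k (z.1, z.2, t) = u (z.1, z.2, t)} with hAdef
    have hkm : Measurable fun z : 𝒞 × ℝ => k (z.1, z.2, t) :=
      hk_meas.comp (measurable_fst.prodMk (measurable_snd.prodMk measurable_const))
    have hum : Measurable fun z : 𝒞 × ℝ => u (z.1, z.2, t) :=
      hu_meas.comp (measurable_fst.prodMk (measurable_snd.prodMk measurable_const))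
    have hA : MeasurableSet A := (measurableSet_eq_fun hkm hum).compl
    have hnull : Pf {ω | ¬ k (C ω, X ω, T ω) = u (C ω, X ω, T ω)} = 0 := ae_iff.1 hku
    have hfS : ∫ ω in (fun ω => (C ω, X ω)) ⁻¹' A,
        (if T ω = t then (1 : ℝ) else 0) ∂Pf = 0 := by
      have heq : (fun ω => if T ω = t then (1 : ℝ) else 0) =
          Set.indicator {ω | T ω = t} fun _ => (1 : ℝ) := by
        funext ω
        simp [Set.indicator_apply, Set.mem_setOf_eq]
      have ms : MeasurableSet {ω | T ω = t} := hT (measurableSet_singleton t)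
      rw [heq, setIntegral_indicator ms, setIntegral_const]
      have hsub : (fun ω => (C ω, X ω)) ⁻¹' A ∩ {ω | T ω = t} ⊆
          {ω | ¬ k (C ω, X ω, T ω) = u (C ω, X ω, T ω)} := by
        rintro ω ⟨h1, h2⟩
        simp only [Set.mem_preimage, hAdef, Set.mem_setOf_eq] at h1 ⊢
        rw [Set.mem_setOf_eq] at h2
        rw [h2]
        exact h1
      rw [measureReal_def, measure_mono_null hsub hnull]
      simp
    have hS0 : Pf ((fun ω => (C ω, X ω)) ⁻¹' A) = 0 :=
      my_null_of_pos_version hCX (hind_int t) hqver hqpos hqint hA hfS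
    exact ae_iff.2 hS0
  -- the main per-regime computation
  have main : ∀ (t : Fin 2) (P : Measure Ω), IsProbabilityMeasure P →
      P ∈ ({P₀, P₁, Pf} : Set (Measure Ω)) → (∀ᵐ ω ∂P, T ω = t) →
      P.map (fun ω => (C ω, X ω)) = Pf.map (fun ω => (C ω, X ω)) →
      ∀ mt : ℝ → ℝ, Measurable mt →
      ((fun ω => mt (X ω)) =ᵐ[P] P[Y | MeasurableSpace.comap X inferInstance]) →
      Integrable (fun ω => mt (X ω)) Pf ∧ Integrable (fun ω => k (C ω, X ω, t)) Pf ∧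
      ∀ B : Set ℝ, MeasurableSet B →
        ∫ ω in X ⁻¹' B, mt (X ω) ∂Pf = ∫ ω in X ⁻¹' B, k (C ω, X ω, t) ∂Pf := by
    intro t P hPprob hPmem hTt hL mt hmt_meas hmt
    have hYP : Integrable Y P := hYint P hPmem
    have hum : Measurable fun z : 𝒞 × ℝ => u (z.1, z.2, t) :=
      hu_meas.comp (measurable_fst.prodMk (measurable_snd.prodMk measurable_const))
    have huP : Integrable (fun ω => u (C ω, X ω, T ω)) P :=
      integrable_condExp.congr (h4b P hPmem).symm
    have huPt : Integrable (fun ω => u (C ω, X ω, t)) P :=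
      huP.congr (hTt.mono fun ω h => by simp only [h])
    have huf : Integrable (fun ω => u (C ω, X ω, t)) Pf :=
      my_integrable_comp_transfer hCX hL hum huPt
    have hkf : Integrable (fun ω => k (C ω, X ω, t)) Pf := huf.congr (hku' t).symm
    have hmP : Integrable (fun ω => mt (X ω)) P := integrable_condExp.congr hmt.symm
    have hXL : P.map X = Pf.map X := by
      have e : ∀ R : Measure Ω, R.map X = (R.map (fun ω => (C ω, X ω))).map Prod.snd := by
        intro R
        rw [Measure.map_map measurable_snd hCX]
        rfl
      rw [e P, e Pf, hL]
    have hmf : Integrable (fun ω => mt (X ω)) Pf :=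
      my_integrable_comp_transfer hX hXL hmt_meas hmP
    refine ⟨hmf, hkf, fun B hB => ?_⟩
    have hBX : MeasurableSet[MeasurableSpace.comap X inferInstance] (X ⁻¹' B) := ⟨B, hB, rfl⟩
    have hBCXT : MeasurableSet[MeasurableSpace.comap (fun ω => (C ω, X ω, T ω))
        inferInstance] (X ⁻¹' B) := by
      refine ⟨Set.univ ×ˢ B ×ˢ Set.univ,
        MeasurableSet.univ.prod (hB.prod MeasurableSet.univ), ?_⟩
      ext ω; simp
    have hpre : X ⁻¹' B = (fun ω => (C ω, X ω)) ⁻¹' (Set.univ ×ˢ B) := by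
      ext ω; simp
    calc ∫ ω in X ⁻¹' B, mt (X ω) ∂Pf
        = ∫ ω in X ⁻¹' B, mt (X ω) ∂P :=
          (my_setIntegral_comp_transfer hX hXL hmt_meas hB).symm
      _ = ∫ ω in X ⁻¹' B, (P[Y | MeasurableSpace.comap X inferInstance]) ω ∂P :=
          integral_congr_ae (ae_restrict_of_ae hmt)
      _ = ∫ ω in X ⁻¹' B, Y ω ∂P := setIntegral_condExp hX.comap_le hYP hBX
      _ = ∫ ω in X ⁻¹' B, (P[Y | MeasurableSpace.comap
            (fun ω => (C ω, X ω, T ω)) inferInstance]) ω ∂P :=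
          (setIntegral_condExp hCXT.comap_le hYP hBCXT).symm
      _ = ∫ ω in X ⁻¹' B, u (C ω, X ω, T ω) ∂P :=
          integral_congr_ae (ae_restrict_of_ae (h4b P hPmem).symm)
      _ = ∫ ω in X ⁻¹' B, u (C ω, X ω, t) ∂P :=
          integral_congr_ae (ae_restrict_of_ae (hTt.mono fun ω h => by simp only [h]))
      _ = ∫ ω in X ⁻¹' B, u (C ω, X ω, t) ∂Pf := by
          rw [hpre]
          exact my_setIntegral_comp_transfer hCX hL hum (MeasurableSet.univ.prod hB)
      _ = ∫ ω in X ⁻¹' B, k (C ω, X ω, t) ∂Pf :=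
          integral_congr_ae (ae_restrict_of_ae (hku' t).symm)
  obtain ⟨hm1f, hk1f, hint1⟩ := main 1 P₁ inferInstance hmem₁ hT1ae
    (h4a.1.symm.trans h4a.2) m₁ hm₁_meas hm₁
  obtain ⟨hm0f, hk0f, hint0⟩ := main 0 P₀ inferInstance hmem₀ hT0ae h4a.2 m₀ hm₀_meas hm₀
  have hsub_int : Integrable (fun ω => k (C ω, X ω, 1) - k (C ω, X ω, 0)) Pf :=
    hk1f.sub hk0f
  have hgoal : (fun ω => m₁ (X ω) - m₀ (X ω)) =ᵐ[Pf]
      Pf[(fun ω => k (C ω, X ω, 1) - k (C ω, X ω, 0)) |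
        MeasurableSpace.comap X inferInstance] := by
    refine ae_eq_condExp_of_forall_setIntegral_eq hX.comap_le hsub_int
      (fun s _ _ => (hm1f.sub hm0f).integrableOn) (fun s hs hμs => ?_) ?_
    · obtain ⟨B, hB, rfl⟩ := hs
      rw [integral_sub hm1f.integrableOn hm0f.integrableOn,
        integral_sub hk1f.integrableOn hk0f.integrableOn, hint1 B hB, hint0 B hB]
    · refine StronglyMeasurable.aestronglyMeasurable ?_
      have hXc : Measurable[MeasurableSpace.comap X inferInstance] X :=
        Measurable.of_comap_le le_rfl
      exact ((hm₁_meas.comp hXc).sub (hm₀_meas.comp hXc)).stronglyMeasurable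
  exact hgoal.trans hr.symm
end

section
/- Let 𝒞 be a set, c ∈ 𝒞, x₀ ∈ ℝ, and let k : 𝒞×ℝ×{0,1} → ℝ, p : 𝒞×ℝ → [0,1] and q : 𝒞×ℝ → ℝ be functions. Assume: (i) for every x ∈ ℝ, q(c, x) = k(c, x, 1)·p(c, x) + k(c, x, 0)·(1 − p(c, x)); (ii) for t = 0, 1 the map x ↦ k(c, x, t) is continuous at x₀; (iii) the one-sided limits p⁺ := lim_{ε↓0} p(c, x₀+ε) and p⁻ := lim_{ε↓0} p(c, x₀−ε) exist and p⁺ − p⁻ ≠ 0. Then lim_{ε↓0} [k(c, x₀+ε, 1) − k(c, x₀−ε, 0)] = lim_{ε↓0} (q(c, x₀+ε) − q(c, x₀−ε)) / (p(c, x₀+ε) − p(c, x₀−ε)), and both limits equal k(c, x₀, 1) − k(c, x₀, 0). -/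
open Filter Topology

/-- deterministic core of Lemma 4.13: with
`q(c, x) = k(c, x, 1)·p(c, x) + k(c, x, 0)·(1 − p(c, x))`, continuity of `x ↦ k(c, x, t)` at
`x₀`, and existing one-sided limits `p⁺ ≠ p⁻` of the propensity, the treatment-based contrast
at the threshold equals the Wald-type ratio of outcome and propensity discontinuities, and
both limits equal `k(c, x₀, 1) − k(c, x₀, 0)`. -/
theorem wald_ratio_identification_deterministic
    {𝒞 : Type*} (c : 𝒞) (x₀ : ℝ)
    (k : 𝒞 × ℝ × Fin 2 → ℝ) (p : 𝒞 × ℝ → ℝ) (q : 𝒞 × ℝ → ℝ)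
    (hp_range : ∀ z, p z ∈ Set.Icc (0 : ℝ) 1)
    -- (i): tower-property decomposition of q in terms of k and p
    (hq : ∀ x : ℝ, q (c, x) = k (c, x, 1) * p (c, x) + k (c, x, 0) * (1 - p (c, x)))
    -- (ii): continuity of x ↦ k(c, x, t) at x₀ for t = 0, 1
    (hk_cont : ∀ t : Fin 2, ContinuousAt (fun x => k (c, x, t)) x₀)
    -- (iii): one-sided limits of the propensity exist and differ
    (pplus pminus : ℝ)
    (hpplus : Tendsto (fun ε => p (c, x₀ + ε)) (𝓝[>] (0 : ℝ)) (𝓝 pplus))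
    (hpminus : Tendsto (fun ε => p (c, x₀ - ε)) (𝓝[>] (0 : ℝ)) (𝓝 pminus))
    (hne : pplus - pminus ≠ 0) :
    Tendsto (fun ε => k (c, x₀ + ε, 1) - k (c, x₀ - ε, 0)) (𝓝[>] (0 : ℝ))
      (𝓝 (k (c, x₀, 1) - k (c, x₀, 0))) ∧
    Tendsto (fun ε => (q (c, x₀ + ε) - q (c, x₀ - ε)) / (p (c, x₀ + ε) - p (c, x₀ - ε)))
      (𝓝[>] (0 : ℝ)) (𝓝 (k (c, x₀, 1) - k (c, x₀, 0))) := by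
  have hxp : Tendsto (fun ε : ℝ => x₀ + ε) (𝓝[>] (0:ℝ)) (𝓝 x₀) := by
    have : Tendsto (fun ε : ℝ => x₀ + ε) (𝓝 (0:ℝ)) (𝓝 x₀) := by
      simpa using (tendsto_const_nhds.add tendsto_id : Tendsto (fun ε : ℝ => x₀ + ε) (𝓝 0) (𝓝 (x₀+0)))
    exact this.mono_left nhdsWithin_le_nhds
  have hxm : Tendsto (fun ε : ℝ => x₀ - ε) (𝓝[>] (0:ℝ)) (𝓝 x₀) := by
    have : Tendsto (fun ε : ℝ => x₀ - ε) (𝓝 (0:ℝ)) (𝓝 x₀) := by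
      simpa using (tendsto_const_nhds.sub tendsto_id : Tendsto (fun ε : ℝ => x₀ - ε) (𝓝 0) (𝓝 (x₀-0)))
    exact this.mono_left nhdsWithin_le_nhds
  have hk1p : Tendsto (fun ε => k (c, x₀ + ε, 1)) (𝓝[>] (0:ℝ)) (𝓝 (k (c, x₀, 1))) :=
    (hk_cont 1).tendsto.comp hxp
  have hk0p : Tendsto (fun ε => k (c, x₀ + ε, 0)) (𝓝[>] (0:ℝ)) (𝓝 (k (c, x₀, 0))) :=
    (hk_cont 0).tendsto.comp hxp
  have hk1m : Tendsto (fun ε => k (c, x₀ - ε, 1)) (𝓝[>] (0:ℝ)) (𝓝 (k (c, x₀, 1))) :=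
    (hk_cont 1).tendsto.comp hxm
  have hk0m : Tendsto (fun ε => k (c, x₀ - ε, 0)) (𝓝[>] (0:ℝ)) (𝓝 (k (c, x₀, 0))) :=
    (hk_cont 0).tendsto.comp hxm
  constructor
  · exact hk1p.sub hk0m
  · have hnum : Tendsto (fun ε => q (c, x₀ + ε) - q (c, x₀ - ε)) (𝓝[>] (0:ℝ))
        (𝓝 ((k (c, x₀, 1) - k (c, x₀, 0)) * (pplus - pminus))) := by
      have h : Tendsto (fun ε => (k (c, x₀ + ε, 1) * p (c, x₀ + ε) + k (c, x₀ + ε, 0) * (1 - p (c, x₀ + ε))) - (k (c, x₀ - ε, 1) * p (c, x₀ - ε) + k (c, x₀ - ε, 0) * (1 - p (c, x₀ - ε)))) (𝓝[>] (0:ℝ))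
          (𝓝 ((k (c, x₀, 1) * pplus + k (c, x₀, 0) * (1 - pplus)) - (k (c, x₀, 1) * pminus + k (c, x₀, 0) * (1 - pminus)))) :=
        ((hk1p.mul hpplus).add (hk0p.mul (tendsto_const_nhds.sub hpplus))).sub
          ((hk1m.mul hpminus).add (hk0m.mul (tendsto_const_nhds.sub hpminus)))
      have heq : ((k (c, x₀, 1) * pplus + k (c, x₀, 0) * (1 - pplus)) - (k (c, x₀, 1) * pminus + k (c, x₀, 0) * (1 - pminus))) = (k (c, x₀, 1) - k (c, x₀, 0)) * (pplus - pminus) := by ring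
      rw [heq] at h
      refine h.congr (fun ε => ?_)
      rw [hq, hq]
    have hden : Tendsto (fun ε => p (c, x₀ + ε) - p (c, x₀ - ε)) (𝓝[>] (0:ℝ)) (𝓝 (pplus - pminus)) :=
      hpplus.sub hpminus
    have := hnum.div hden hne
    rw [mul_div_assoc, div_self hne, mul_one] at this
    exact this
end

section
/- Let C, X, T, Y be random variables on a measurable space (Ω, 𝓕) with C valued in a standard Borel space 𝒞, X in ℝ, T in {0,1}, Y in ℝ, let P_f be a probability measure under which Y is integrable, and let x₀ ∈ ℝ. Let k : 𝒞×ℝ×{0,1} → ℝ, p : 𝒞×ℝ → [0,1] and q : 𝒞×ℝ → ℝ be measurable functions such that, for P_f-almost every ω: (i) q(C(ω), x) = k(C(ω), x, 1)·p(C(ω), x) + k(C(ω), x, 0)·(1 − p(C(ω), x)) for all x ∈ ℝ; (ii) x ↦ k(C(ω), x, t) is continuous at x₀ for t = 0, 1; (iii) the one-sided limits lim_{ε↓0} p(C(ω), x₀±ε) exist and their difference is nonzero. Then, P_f-almost surely, lim_{ε↓0} (q(C, x₀+ε) − q(C, x₀−ε)) / (p(C, x₀+ε) − p(C, x₀−ε))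 exists and equals k(C, x₀, 1) − k(C, x₀, 0); consequently, any version of E_{P_f}[lim_{ε↓0} (q(C, x₀+ε) − q(C, x₀−ε)) / (p(C, x₀+ε) − p(C, x₀−ε)) | σ(X)] is a version of E_{P_f}[k(C, x₀, 1) − k(C, x₀, 0) | σ(X)]. -/
open MeasureTheory Filter Topology

/-- Theorem 4.14, fuzzy RDD, IV/Wald form: under the a.s. tower decomposition,
continuity, and nonzero one-sided propensity discontinuity, the Wald-type ratio of outcome and
propensity discontinuities converges `P_f`-a.s. to `k(C, x₀, 1) − k(C, x₀, 0)`; consequently any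
version of its conditional expectation given `σ(X)` is a version of
`E_{P_f}[k(C, x₀, 1) − k(C, x₀, 0) | σ(X)]`. -/
theorem fuzzy_rdd_wald_ratio_identification
    {Ω 𝒞 : Type*} [MeasurableSpace Ω] [MeasurableSpace 𝒞] [StandardBorelSpace 𝒞]
    (C : Ω → 𝒞) (X : Ω → ℝ) (T : Ω → Fin 2) (Y : Ω → ℝ)
    (hC : Measurable C) (hX : Measurable X) (hT : Measurable T) (hY : Measurable Y)
    (Pf : Measure Ω) [IsProbabilityMeasure Pf] (hYint : Integrable Y Pf)
    (x₀ : ℝ)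
    (k : 𝒞 × ℝ × Fin 2 → ℝ) (p : 𝒞 × ℝ → ℝ) (q : 𝒞 × ℝ → ℝ)
    (hk_meas : Measurable k) (hp_meas : Measurable p) (hq_meas : Measurable q)
    (hp_range : ∀ z, p z ∈ Set.Icc (0 : ℝ) 1)
    -- (i): a.s. tower decomposition of q in terms of k and p, for all x
    (hq : ∀ᵐ ω ∂Pf, ∀ x : ℝ,
      q (C ω, x) = k (C ω, x, 1) * p (C ω, x) + k (C ω, x, 0) * (1 - p (C ω, x)))
    -- (ii): a.s. continuity of x ↦ k(C(ω), x, t) at x₀ for t = 0, 1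
    (hk_cont : ∀ᵐ ω ∂Pf, ∀ t : Fin 2, ContinuousAt (fun x => k (C ω, x, t)) x₀)
    -- (iii): a.s. the one-sided limits of the propensity exist and their difference is nonzero
    (hp_lim : ∀ᵐ ω ∂Pf, ∃ pplus pminus : ℝ,
      Tendsto (fun ε => p (C ω, x₀ + ε)) (𝓝[>] (0 : ℝ)) (𝓝 pplus) ∧
      Tendsto (fun ε => p (C ω, x₀ - ε)) (𝓝[>] (0 : ℝ)) (𝓝 pminus) ∧
      pplus - pminus ≠ 0) :
    -- the Wald ratio converges a.s. to k(C, x₀, 1) − k(C, x₀, 0) ...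
    (∀ᵐ ω ∂Pf,
      Tendsto (fun ε =>
          (q (C ω, x₀ + ε) - q (C ω, x₀ - ε)) / (p (C ω, x₀ + ε) - p (C ω, x₀ - ε)))
        (𝓝[>] (0 : ℝ)) (𝓝 (k (C ω, x₀, 1) - k (C ω, x₀, 0)))) ∧
    -- ... hence for any L realizing that limit a.s., the conditional expectations coincide
    (∀ L : Ω → ℝ,
      (∀ᵐ ω ∂Pf,
        Tendsto (fun ε =>
            (q (C ω, x₀ + ε) - q (C ω, x₀ - ε)) / (p (C ω, x₀ + ε) - p (C ω, x₀ - ε)))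
          (𝓝[>] (0 : ℝ)) (𝓝 (L ω))) →
      Pf[L | MeasurableSpace.comap X inferInstance]
        =ᵐ[Pf] Pf[(fun ω => k (C ω, x₀, 1) - k (C ω, x₀, 0)) |
          MeasurableSpace.comap X inferInstance]) := by

  have main : ∀ᵐ ω ∂Pf,
      Tendsto (fun ε =>
          (q (C ω, x₀ + ε) - q (C ω, x₀ - ε)) / (p (C ω, x₀ + ε) - p (C ω, x₀ - ε)))
        (𝓝[>] (0 : ℝ)) (𝓝 (k (C ω, x₀, 1) - k (C ω, x₀, 0))) := by
    filter_upwards [hq, hk_cont, hp_lim] with ω hqω hkω hpω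
    obtain ⟨pplus, pminus, hpp, hpm, hne⟩ := hpω
    have hplus : Tendsto (fun ε : ℝ => x₀ + ε) (𝓝[>] (0 : ℝ)) (𝓝 x₀) := by
      have : Tendsto (fun ε : ℝ => x₀ + ε) (𝓝 (0 : ℝ)) (𝓝 (x₀ + 0)) :=
        (continuous_const.add continuous_id).tendsto 0
      simpa using this.mono_left nhdsWithin_le_nhds
    have hminus : Tendsto (fun ε : ℝ => x₀ - ε) (𝓝[>] (0 : ℝ)) (𝓝 x₀) := by
      have : Tendsto (fun ε : ℝ => x₀ - ε) (𝓝 (0 : ℝ)) (𝓝 (x₀ - 0)) :=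
        (continuous_const.sub continuous_id).tendsto 0
      simpa using this.mono_left nhdsWithin_le_nhds
    have hk1p : Tendsto (fun ε => k (C ω, x₀ + ε, 1)) (𝓝[>] (0 : ℝ)) (𝓝 (k (C ω, x₀, 1))) :=
      (hkω 1).tendsto.comp hplus
    have hk0p : Tendsto (fun ε => k (C ω, x₀ + ε, 0)) (𝓝[>] (0 : ℝ)) (𝓝 (k (C ω, x₀, 0))) :=
      (hkω 0).tendsto.comp hplus
    have hk1m : Tendsto (fun ε => k (C ω, x₀ - ε, 1)) (𝓝[>] (0 : ℝ)) (𝓝 (k (C ω, x₀, 1))) :=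
      (hkω 1).tendsto.comp hminus
    have hk0m : Tendsto (fun ε => k (C ω, x₀ - ε, 0)) (𝓝[>] (0 : ℝ)) (𝓝 (k (C ω, x₀, 0))) :=
      (hkω 0).tendsto.comp hminus
    have hnum : Tendsto (fun ε => q (C ω, x₀ + ε) - q (C ω, x₀ - ε)) (𝓝[>] (0 : ℝ))
        (𝓝 ((k (C ω, x₀, 1) - k (C ω, x₀, 0)) * (pplus - pminus))) := by
      have hEq : (fun ε => q (C ω, x₀ + ε) - q (C ω, x₀ - ε)) =
          fun ε => (k (C ω, x₀ + ε, 1) * p (C ω, x₀ + ε)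
              + k (C ω, x₀ + ε, 0) * (1 - p (C ω, x₀ + ε)))
            - (k (C ω, x₀ - ε, 1) * p (C ω, x₀ - ε)
              + k (C ω, x₀ - ε, 0) * (1 - p (C ω, x₀ - ε))) := by
        funext ε; rw [hqω (x₀ + ε), hqω (x₀ - ε)]
      rw [hEq]
      have hone : Tendsto (fun _ : ℝ => (1 : ℝ)) (𝓝[>] (0 : ℝ)) (𝓝 (1 : ℝ)) :=
        tendsto_const_nhds
      have h2 := ((hk1p.mul hpp).add (hk0p.mul (hone.sub hpp))).sub
        ((hk1m.mul hpm).add (hk0m.mul (hone.sub hpm)))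
      convert h2 using 2
      ring
    have hden : Tendsto (fun ε => p (C ω, x₀ + ε) - p (C ω, x₀ - ε)) (𝓝[>] (0 : ℝ))
        (𝓝 (pplus - pminus)) := hpp.sub hpm
    have := hnum.div hden hne
    convert this using 2
    · rfl
    · rw [mul_div_assoc, div_self hne, mul_one]
  refine ⟨main, fun L hL => ?_⟩
  have hLeq : L =ᵐ[Pf] fun ω => k (C ω, x₀, 1) - k (C ω, x₀, 0) := by
    filter_upwards [main, hL] with ω h1 h2
    exact tendsto_nhds_unique h2 h1
  exact condExp_congr_ae hLeq
end

section
/- Let (Ω, 𝓕) be a measurable space, S a finite nonempty set, and (P_σ)_{σ∈S} a family of probability measures on (Ω, 𝓕). Let U and V be random variables on Ω taking values in standard Borel spaces, and suppose the joint law of (U, V) is the same under P_σ for every σ ∈ S. Then U ⫫ Σ | V: for every bounded measurable real-valued function h there exists a single measurable function w such that w(V) is a version of E_{P_σ}[h(U) | σ(V)] simultaneously for every σ ∈ S. -/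
open MeasureTheory

/-- extended conditional independence from a regime-independent joint law:
if the joint law of `(U, V)` is the same under every regime `P_σ`, `σ ∈ S`, then `U ⫫ Σ | V`:
for every bounded measurable `h` there is a single measurable `w` such that `w(V)` is a version
of `E_{P_σ}[h(U) | σ(V)]` simultaneously for every `σ ∈ S`. -/
theorem extended_condIndep_of_regime_indep_law
    {Ω S α β : Type*} [MeasurableSpace Ω] [Finite S] [Nonempty S]
    [MeasurableSpace α] [StandardBorelSpace α]
    [MeasurableSpace β] [StandardBorelSpace β]
    (P : S → Measure Ω) [∀ σ, IsProbabilityMeasure (P σ)]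
    (U : Ω → α) (V : Ω → β) (hU : Measurable U) (hV : Measurable V)
    (hlaw : ∀ σ σ' : S,
      Measure.map (fun ω => (U ω, V ω)) (P σ) = Measure.map (fun ω => (U ω, V ω)) (P σ')) :
    ∀ h : α → ℝ, Measurable h → (∃ M, ∀ a, |h a| ≤ M) →
      ∃ w : β → ℝ, Measurable w ∧ ∀ σ : S,
        (fun ω => w (V ω)) =ᵐ[P σ]
          (P σ)[(fun ω => h (U ω)) | MeasurableSpace.comap V inferInstance] := by
  intro h hh hbd
  obtain ⟨M, hM⟩ := hbd
  obtain ⟨σ₀⟩ := (inferInstance : Nonempty S)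
  have hΩ : Nonempty Ω := by
    by_contra hne
    have huniv : (Set.univ : Set Ω) = ∅ := by
      simp [Set.eq_empty_iff_forall_notMem]; exact fun x => hne ⟨x⟩
    have := measure_univ (μ := P σ₀)
    rw [huniv, measure_empty] at this
    exact zero_ne_one this
  obtain ⟨ω₀⟩ := hΩ
  set a₀ : α := U ω₀ with ha₀
  have hUV : Measurable fun ω => (U ω, V ω) := hU.prodMk hV
  set μ := Measure.map (fun ω => (U ω, V ω)) (P σ₀) with hμdef
  haveI : IsProbabilityMeasure μ := Measure.isProbabilityMeasure_map hUV.aemeasurable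
  have hm2 : MeasurableSpace.comap (Prod.snd : α × β → β) inferInstance
      ≤ Prod.instMeasurableSpace := measurable_snd.comap_le
  -- the conditional expectation of `h ∘ fst` given `snd` under `μ`
  set g : α × β → ℝ := μ[(fun p => h p.1) | MeasurableSpace.comap (Prod.snd : α × β → β) inferInstance] with hgdef
  have hgsm : StronglyMeasurable[MeasurableSpace.comap (Prod.snd : α × β → β) inferInstance] g := stronglyMeasurable_condExp
  have hgm : Measurable[MeasurableSpace.comap (Prod.snd : α × β → β) inferInstance] g := hgsm.measurable
  -- `g` factors through `snd`
  have hfac : ∀ p : α × β, g p = g (a₀, p.2) := by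
    intro p
    obtain ⟨B, hB, hBe⟩ := hgm (measurableSet_singleton (g p))
    have hp : p ∈ Prod.snd ⁻¹' B := by rw [hBe]; rfl
    have hp' : (a₀, p.2) ∈ Prod.snd ⁻¹' B := hp
    rw [hBe] at hp'
    exact hp'.symm
  refine ⟨fun b => g (a₀, b), (hgm.mono hm2 le_rfl).comp
    measurable_prodMk_left, fun σ => ?_⟩
  have hμσ : Measure.map (fun ω => (U ω, V ω)) (P σ) = μ := hlaw σ σ₀
  have hm : MeasurableSpace.comap V inferInstance ≤ (inferInstance : MeasurableSpace Ω) :=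
    hV.comap_le
  haveI : SigmaFinite ((P σ).trim hm) := inferInstance
  -- integrability of `h ∘ U` and of `h ∘ fst`
  have hint : Integrable (fun ω => h (U ω)) (P σ) := by
    refine Integrable.mono' (integrable_const M) ((hh.comp hU).aestronglyMeasurable)
      (ae_of_all _ fun ω => ?_)
    simpa [Real.norm_eq_abs] using hM (U ω)
  have hint2 : Integrable (fun p : α × β => h p.1) μ := by
    refine Integrable.mono' (integrable_const M) ((hh.comp measurable_fst).aestronglyMeasurable)
      (ae_of_all _ fun p => ?_)
    simpa [Real.norm_eq_abs] using hM p.1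
  have hgint : Integrable g μ := integrable_condExp
  -- `fun ω => g (a₀, V ω)` is integrable
  have hwV : Integrable (fun ω => g (a₀, V ω)) (P σ) := by
    have : Integrable (fun p : α × β => g (a₀, p.2)) μ := by
      refine hgint.congr (ae_of_all _ fun p => ?_)
      exact hfac p
    rw [← hμσ] at this
    exact (integrable_map_measure
      ((hgm.mono hm2 le_rfl).comp
        (measurable_prodMk_left.comp measurable_snd)).aestronglyMeasurable
      hUV.aemeasurable).mp this
  refine ae_eq_condExp_of_forall_setIntegral_eq hm hint
    (fun s _ _ => hwV.integrableOn) ?_ ?_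
  · rintro s ⟨B, hB, rfl⟩ -
    have hsndB : MeasurableSet (Prod.snd ⁻¹' B : Set (α × β)) := measurable_snd hB
    -- change of variables for both sides
    have hgsnd : Measurable (fun p : α × β => g (a₀, p.2)) :=
      ((hgm.mono hm2 le_rfl).comp measurable_prodMk_left).comp measurable_snd
    have hhfst : Measurable (fun p : α × β => h p.1) := hh.comp measurable_fst
    have h1 : ∫ x in V ⁻¹' B, g (a₀, V x) ∂(P σ)
        = ∫ p in Prod.snd ⁻¹' B, g (a₀, p.2) ∂μ := by
      rw [← hμσ, setIntegral_map hsndB hgsnd.aestronglyMeasurable hUV.aemeasurable]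
      rfl
    have h2 : ∫ x in V ⁻¹' B, h (U x) ∂(P σ)
        = ∫ p in Prod.snd ⁻¹' B, h p.1 ∂μ := by
      rw [← hμσ, setIntegral_map hsndB hhfst.aestronglyMeasurable hUV.aemeasurable]
      rfl
    rw [h1, h2]
    have h3 : ∫ p in Prod.snd ⁻¹' B, g (a₀, p.2) ∂μ = ∫ p in Prod.snd ⁻¹' B, g p ∂μ := by
      refine setIntegral_congr_ae hsndB (ae_of_all _ fun p _ => ?_)
      exact (hfac p).symm
    rw [h3, hgdef]
    exact setIntegral_condExp hm2 hint2 ⟨B, hB, rfl⟩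
  · refine StronglyMeasurable.aestronglyMeasurable ?_
    have hVm : Measurable[MeasurableSpace.comap V inferInstance] V :=
      fun s hs => ⟨s, hs, rfl⟩
    exact (((hgm.mono hm2 le_rfl).comp
      measurable_prodMk_left).comp hVm).stronglyMeasurable
end

section
/- Let (Ω, 𝓕) be a measurable space, S a finite nonempty set, and (P_σ)_{σ∈S} a family of probability measures on (Ω, 𝓕). Let U, V, W, Y be random variables on Ω taking values in standard Borel spaces. Assume: (i) U ⫫ Σ | (V, W), i.e. for every bounded measurable real h there is a single measurable function w_h such that w_h(V, W) is a version of E_{P_σ}[h(U) | σ(V, W)] for every σ ∈ S; and (ii) Y ⫫ Σ | (U, V, W), i.e. for every bounded measurable real g there is a single measurable function u_g such that u_g(U, V, W) is a version of E_{P_σ}[g(Y) | σ(U, V, W)] for every σ ∈ S. Then Y ⫫ Σ | (V, W): for every bounded measurable real g there is a single measurable function r_g such that r_g(V, W) is a version of E_{P_σ}[g(Y) | σ(V, W)] for every σ ∈ S. -/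
open MeasureTheory

open scoped ENNReal

lemma aux_ae_le_of_comap {Ω : Type*} {m m0 : MeasurableSpace Ω}
    (hm : m ≤ m0) (μ : Measure Ω) [IsFiniteMeasure μ] {φ ψ : Ω → ℝ≥0∞}
    (hφ : Measurable[m] φ) (hψ : Measurable[m] ψ)
    (h : ∀ s : Set Ω, MeasurableSet[m] s → ∫⁻ ω in s, φ ω ∂μ ≤ ∫⁻ ω in s, ψ ω ∂μ) :
    φ ≤ᵐ[μ] ψ := by
  haveI : IsFiniteMeasure (μ.trim hm) := isFiniteMeasure_trim hm
  refine ae_le_of_ae_le_trim (hm := hm) ?_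
  refine ae_le_of_forall_setLIntegral_le_of_sigmaFinite₀ hφ.aemeasurable ?_
  intro s hs _
  rw [show (μ.trim hm).restrict s = (μ.restrict s).trim hm from restrict_trim hm μ hs,
    lintegral_trim hm hφ, lintegral_trim hm hψ]
  exact h s hs

section Main

variable {Ω S α β γ δ : Type*} [MeasurableSpace Ω]
    [MeasurableSpace α] [MeasurableSpace β] [MeasurableSpace γ] [MeasurableSpace δ]
    (P : S → Measure Ω) [∀ σ, IsProbabilityMeasure (P σ)]
    (U : Ω → α) (V : Ω → β) (W : Ω → γ)

/-- Step A: common lebesgue "conditional probability" versions for indicators. -/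
lemma stepA (hU : Measurable U) (hV : Measurable V) (hW : Measurable W)
    (hECI₁ : ∀ h : α → ℝ, Measurable h → (∃ M, ∀ a, |h a| ≤ M) →
      ∃ w : β × γ → ℝ, Measurable w ∧ ∀ σ : S,
        (fun ω => w (V ω, W ω)) =ᵐ[P σ]
          (P σ)[(fun ω => h (U ω)) |
            MeasurableSpace.comap (fun ω => (V ω, W ω)) inferInstance]) :
    ∀ A : Set (α × β × γ), MeasurableSet A →
      ∃ r : β × γ → ℝ≥0∞, Measurable r ∧ ∀ σ : S, ∀ t : Set (β × γ), MeasurableSet t →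
        ∫⁻ ω in (fun ω => (V ω, W ω)) ⁻¹' t, r (V ω, W ω) ∂(P σ)
          = P σ ((fun ω => (V ω, W ω)) ⁻¹' t ∩ (fun ω => (U ω, V ω, W ω)) ⁻¹' A) := by
  set Z : Ω → β × γ := fun ω => (V ω, W ω) with hZdef
  set T : Ω → α × β × γ := fun ω => (U ω, V ω, W ω) with hTdef
  have hZ : Measurable Z := hV.prodMk hW
  have hT : Measurable T := hU.prodMk (hV.prodMk hW)
  have hmZ : MeasurableSpace.comap Z inferInstance ≤ ‹MeasurableSpace Ω› := hZ.comap_le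
  have hZmZ : Measurable[MeasurableSpace.comap Z inferInstance] Z :=
    measurable_iff_comap_le.mpr le_rfl
  haveI : ∀ σ : S, SigmaFinite ((P σ).trim hmZ) := fun σ =>
    haveI : IsFiniteMeasure ((P σ).trim hmZ) := isFiniteMeasure_trim hmZ
    inferInstance
  refine MeasurableSpace.induction_on_inter
    (C := fun A _ => ∃ r : β × γ → ℝ≥0∞, Measurable r ∧ ∀ σ : S, ∀ t : Set (β × γ),
      MeasurableSet t →
      ∫⁻ ω in Z ⁻¹' t, r (Z ω) ∂(P σ) = P σ (Z ⁻¹' t ∩ T ⁻¹' A))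
    generateFrom_prod.symm isPiSystem_prod ?_ ?_ ?_ ?_
  · -- empty
    exact ⟨0, measurable_const, fun σ t ht => by simp⟩
  · -- rectangles
    rintro A ⟨s, hs, t₀, ht₀, rfl⟩
    simp only [Set.mem_setOf_eq] at hs ht₀
    obtain ⟨w, hw, hwae⟩ := hECI₁ (s.indicator fun _ => (1 : ℝ))
      (measurable_const.indicator hs)
      ⟨1, fun a => by by_cases ha : a ∈ s <;> simp [Set.indicator, ha]⟩
    refine ⟨fun x => t₀.indicator (fun y => ENNReal.ofReal (w y)) x,
      (hw.ennreal_ofReal).indicator ht₀, fun σ t ht => ?_⟩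
    have hwZ : (fun ω => w (Z ω)) =ᵐ[P σ]
        (P σ)[(fun ω => s.indicator (fun _ => (1:ℝ)) (U ω)) |
          MeasurableSpace.comap Z inferInstance] := hwae σ
    have hind_int : Integrable (fun ω => s.indicator (fun _ => (1:ℝ)) (U ω)) (P σ) := by
      refine Integrable.mono' (integrable_const (1:ℝ))
        ((measurable_const.indicator hs).comp hU).aestronglyMeasurable
        (Filter.Eventually.of_forall fun ω => ?_)
      by_cases hω : U ω ∈ s <;> simp [Set.indicator, hω]
    -- reduce the indicator on t₀
    have h1 : ∫⁻ ω in Z ⁻¹' t, t₀.indicator (fun y => ENNReal.ofReal (w y)) (Z ω) ∂(P σ)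
        = ∫⁻ ω in Z ⁻¹' (t ∩ t₀), ENNReal.ofReal (w (Z ω)) ∂(P σ) := by
      have : ∀ ω, t₀.indicator (fun y => ENNReal.ofReal (w y)) (Z ω)
          = (Z ⁻¹' t₀).indicator (fun ω => ENNReal.ofReal (w (Z ω))) ω := by
        intro ω; by_cases hω : Z ω ∈ t₀ <;> simp [Set.indicator, hω]
      simp_rw [this]
      rw [lintegral_indicator (hZ ht₀), Measure.restrict_restrict (hZ ht₀),
        Set.preimage_inter, Set.inter_comm]
    rw [h1]
    have hE : MeasurableSet[MeasurableSpace.comap Z inferInstance] (Z ⁻¹' (t ∩ t₀)) :=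
      ⟨t ∩ t₀, ht.inter ht₀, rfl⟩
    have hE' : MeasurableSet (Z ⁻¹' (t ∩ t₀)) := hZ (ht.inter ht₀)
    have hwZ_int : Integrable (fun ω => w (Z ω)) (P σ) :=
      integrable_condExp.congr hwZ.symm
    have hcond_nn : 0 ≤ᵐ[P σ] (P σ)[(fun ω => s.indicator (fun _ => (1:ℝ)) (U ω)) |
        MeasurableSpace.comap Z inferInstance] :=
      condExp_nonneg (Filter.Eventually.of_forall fun ω => by
        by_cases hω : U ω ∈ s <;> simp [Set.indicator, hω])
    have hwZ_nn : 0 ≤ᵐ[P σ] fun ω => w (Z ω) := by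
      filter_upwards [hcond_nn, hwZ] with ω h1 h2
      rw [h2]; exact h1
    rw [← ofReal_integral_eq_lintegral_ofReal hwZ_int.integrableOn
      (ae_restrict_of_ae hwZ_nn)]
    have h2 : ∫ ω in Z ⁻¹' (t ∩ t₀), w (Z ω) ∂(P σ)
        = ∫ ω in Z ⁻¹' (t ∩ t₀), s.indicator (fun _ => (1:ℝ)) (U ω) ∂(P σ) := by
      rw [setIntegral_congr_ae hE' (hwZ.mono fun ω h _ => h)]
      exact setIntegral_condExp hmZ hind_int hE
    have h3 : ∫ ω in Z ⁻¹' (t ∩ t₀), s.indicator (fun _ => (1:ℝ)) (U ω) ∂(P σ)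
        = (P σ (Z ⁻¹' (t ∩ t₀) ∩ U ⁻¹' s)).toReal := by
      have hι : ∀ ω, s.indicator (fun _ => (1:ℝ)) (U ω)
          = (U ⁻¹' s).indicator (fun _ => (1:ℝ)) ω := by
        intro ω; by_cases hω : U ω ∈ s <;> simp [Set.indicator, hω]
      simp_rw [hι]
      rw [setIntegral_indicator (hU hs), setIntegral_const]
      simp [measureReal_def]
    have h4 : Z ⁻¹' t ∩ T ⁻¹' (s ×ˢ t₀) = Z ⁻¹' (t ∩ t₀) ∩ U ⁻¹' s := by
      ext ω
      simp only [Set.mem_inter_iff, Set.mem_preimage, Set.mem_prod, Set.mem_inter_iff, hZdef,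
        hTdef]
      tauto
    rw [h2, h3, h4, ENNReal.ofReal_toReal (measure_ne_top _ _)]
  · -- complement
    rintro A hA ⟨r, hr, hrint⟩
    refine ⟨fun x => 1 - r x, measurable_const.sub hr, fun σ t ht => ?_⟩
    have hble : (fun ω => r (Z ω)) ≤ᵐ[P σ] fun _ => (1 : ℝ≥0∞) := by
      refine aux_ae_le_of_comap hmZ (P σ) (hr.comp hZmZ) measurable_const ?_
      rintro s ⟨t', ht', rfl⟩
      rw [hrint σ t' ht', setLIntegral_one]
      exact measure_mono Set.inter_subset_left
    have hsub : ∫⁻ ω in Z ⁻¹' t, (1 - r (Z ω)) ∂(P σ)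
        = ∫⁻ ω in Z ⁻¹' t, 1 ∂(P σ) - ∫⁻ ω in Z ⁻¹' t, r (Z ω) ∂(P σ) :=
      lintegral_sub (hr.comp hZ) (by rw [hrint σ t ht]; exact measure_ne_top _ _)
        (ae_restrict_of_ae hble)
    rw [hsub, setLIntegral_one, hrint σ t ht]
    have hset : Z ⁻¹' t ∩ T ⁻¹' Aᶜ = Z ⁻¹' t \ (Z ⁻¹' t ∩ T ⁻¹' A) := by
      ext ω
      simp only [Set.mem_inter_iff, Set.mem_preimage, Set.mem_compl_iff, Set.mem_diff]
      tauto
    rw [hset, measure_diff Set.inter_subset_left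
      ((hZ ht).inter (hT hA)).nullMeasurableSet (measure_ne_top _ _)]
  · -- disjoint unions
    rintro f hdisj hfm hC
    choose r hr hrint using hC
    refine ⟨fun x => ∑' n, r n x, Measurable.ennreal_tsum hr, fun σ t ht => ?_⟩
    show ∫⁻ ω in Z ⁻¹' t, ∑' n, r n (Z ω) ∂(P σ) = P σ (Z ⁻¹' t ∩ T ⁻¹' ⋃ i, f i)
    rw [lintegral_tsum (f := fun n ω => r n (Z ω)) fun n => ((hr n).comp hZ).aemeasurable]
    have heq : ∀ n, ∫⁻ ω in Z ⁻¹' t, r n (Z ω) ∂(P σ) = P σ (Z ⁻¹' t ∩ T ⁻¹' f n) :=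
      fun n => hrint n σ t ht
    simp_rw [heq]
    have hset : Z ⁻¹' t ∩ T ⁻¹' (⋃ n, f n) = ⋃ n, (Z ⁻¹' t ∩ T ⁻¹' f n) := by
      rw [Set.preimage_iUnion, Set.inter_iUnion]
    rw [hset, measure_iUnion (fun i j hij =>
        (((hdisj hij).preimage T).mono Set.inter_subset_right Set.inter_subset_right))
      (fun n => (hZ ht).inter (hT (hfm n)))]


/-- Step B: common lebesgue conditional expectation versions for all `ℝ≥0∞`-valued functions. -/
lemma stepB (hU : Measurable U) (hV : Measurable V) (hW : Measurable W)
    (hECI₁ : ∀ h : α → ℝ, Measurable h → (∃ M, ∀ a, |h a| ≤ M) →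
      ∃ w : β × γ → ℝ, Measurable w ∧ ∀ σ : S,
        (fun ω => w (V ω, W ω)) =ᵐ[P σ]
          (P σ)[(fun ω => h (U ω)) |
            MeasurableSpace.comap (fun ω => (V ω, W ω)) inferInstance]) :
    ∀ f : α × β × γ → ℝ≥0∞, Measurable f →
      ∃ r : β × γ → ℝ≥0∞, Measurable r ∧ ∀ σ : S, ∀ t : Set (β × γ), MeasurableSet t →
        ∫⁻ ω in (fun ω => (V ω, W ω)) ⁻¹' t, r (V ω, W ω) ∂(P σ)
          = ∫⁻ ω in (fun ω => (V ω, W ω)) ⁻¹' t, f (U ω, V ω, W ω) ∂(P σ) := by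
  set Z : Ω → β × γ := fun ω => (V ω, W ω) with hZdef
  set T : Ω → α × β × γ := fun ω => (U ω, V ω, W ω) with hTdef
  have hZ : Measurable Z := hV.prodMk hW
  have hT : Measurable T := hU.prodMk (hV.prodMk hW)
  have hmZ : MeasurableSpace.comap Z inferInstance ≤ ‹MeasurableSpace Ω› := hZ.comap_le
  have hZmZ : Measurable[MeasurableSpace.comap Z inferInstance] Z :=
    measurable_iff_comap_le.mpr le_rfl
  have hA := stepA P U V W hU hV hW hECI₁
  intro f hf
  refine Measurable.ennreal_induction
    (motive := fun f => ∃ r : β × γ → ℝ≥0∞, Measurable r ∧ ∀ σ : S, ∀ t : Set (β × γ),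
      MeasurableSet t →
      ∫⁻ ω in Z ⁻¹' t, r (Z ω) ∂(P σ) = ∫⁻ ω in Z ⁻¹' t, f (T ω) ∂(P σ))
    ?_ ?_ ?_ hf
  · -- indicators
    intro c s hs
    obtain ⟨r, hr, hrint⟩ := hA s hs
    refine ⟨fun x => c * r x, hr.const_mul c, fun σ t ht => ?_⟩
    show ∫⁻ ω in Z ⁻¹' t, c * r (Z ω) ∂(P σ) = _
    rw [lintegral_const_mul (f := fun ω => r (Z ω)) c (hr.comp hZ), hrint σ t ht]
    have hι : ∀ ω, (s.indicator fun _ => c) (T ω) = (T ⁻¹' s).indicator (fun _ => c) ω := by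
      intro ω; by_cases hω : T ω ∈ s <;> simp [Set.indicator, hω]
    simp_rw [hι]
    rw [lintegral_indicator (hT hs), Measure.restrict_restrict (hT hs), setLIntegral_const,
      Set.inter_comm]
  · -- addition
    rintro f g - hfm hgm ⟨rf, hrf, hrfint⟩ ⟨rg, hrg, hrgint⟩
    refine ⟨rf + rg, hrf.add hrg, fun σ t ht => ?_⟩
    show ∫⁻ ω in Z ⁻¹' t, rf (Z ω) + rg (Z ω) ∂(P σ)
      = ∫⁻ ω in Z ⁻¹' t, f (T ω) + g (T ω) ∂(P σ)
    rw [lintegral_add_left (f := fun ω => rf (Z ω)) (hrf.comp hZ),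
      lintegral_add_left (f := fun ω => f (T ω)) ((hfm).comp hT),
      hrfint σ t ht, hrgint σ t ht]
  · -- monotone suprema
    rintro f hfm hmono hP
    choose r hr hrint using hP
    have hmonoae : ∀ σ : S, ∀ᵐ ω ∂(P σ), Monotone fun n => r n (Z ω) := by
      intro σ
      have hstep : ∀ n : ℕ, (fun ω => r n (Z ω)) ≤ᵐ[P σ] fun ω => r (n + 1) (Z ω) := by
        intro n
        refine aux_ae_le_of_comap hmZ (P σ) ((hr n).comp hZmZ) ((hr (n + 1)).comp hZmZ) ?_
        rintro s ⟨t', ht', rfl⟩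
        rw [hrint n σ t' ht', hrint (n + 1) σ t' ht']
        exact lintegral_mono fun ω => hmono (Nat.le_succ n) (T ω)
      filter_upwards [ae_all_iff.mpr hstep] with ω hω
      exact monotone_nat_of_le_succ hω
    refine ⟨fun x => ⨆ n, r n x, Measurable.iSup hr, fun σ t ht => ?_⟩
    calc ∫⁻ ω in Z ⁻¹' t, ⨆ n, r n (Z ω) ∂(P σ)
        = ⨆ n, ∫⁻ ω in Z ⁻¹' t, r n (Z ω) ∂(P σ) :=
          lintegral_iSup' (f := fun n ω => r n (Z ω))
            (fun n => ((hr n).comp hZ).aemeasurable.restrict)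
            (ae_restrict_of_ae (hmonoae σ))
      _ = ⨆ n, ∫⁻ ω in Z ⁻¹' t, f n (T ω) ∂(P σ) := by
          exact iSup_congr fun n => hrint n σ t ht
      _ = ∫⁻ ω in Z ⁻¹' t, ⨆ n, f n (T ω) ∂(P σ) :=
          (lintegral_iSup (fun n => (hfm n).comp hT)
            (fun n m hnm ω => hmono hnm (T ω))).symm


theorem extended_condIndep_contraction_decomposition'
    (hU : Measurable U) (hV : Measurable V) (hW : Measurable W)
    {δ : Type*} [MeasurableSpace δ] (Y : Ω → δ) (hY : Measurable Y)
    (hECI₁ : ∀ h : α → ℝ, Measurable h → (∃ M, ∀ a, |h a| ≤ M) →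
      ∃ w : β × γ → ℝ, Measurable w ∧ ∀ σ : S,
        (fun ω => w (V ω, W ω)) =ᵐ[P σ]
          (P σ)[(fun ω => h (U ω)) |
            MeasurableSpace.comap (fun ω => (V ω, W ω)) inferInstance])
    (hECI₂ : ∀ g : δ → ℝ, Measurable g → (∃ M, ∀ d, |g d| ≤ M) →
      ∃ u : α × β × γ → ℝ, Measurable u ∧ ∀ σ : S,
        (fun ω => u (U ω, V ω, W ω)) =ᵐ[P σ]
          (P σ)[(fun ω => g (Y ω)) |
            MeasurableSpace.comap (fun ω => (U ω, V ω, W ω)) inferInstance]) :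
    ∀ g : δ → ℝ, Measurable g → (∃ M, ∀ d, |g d| ≤ M) →
      ∃ r : β × γ → ℝ, Measurable r ∧ ∀ σ : S,
        (fun ω => r (V ω, W ω)) =ᵐ[P σ]
          (P σ)[(fun ω => g (Y ω)) |
            MeasurableSpace.comap (fun ω => (V ω, W ω)) inferInstance] := by
  intro g hg hgM
  obtain ⟨M₀, hM₀⟩ := hgM
  set Z : Ω → β × γ := fun ω => (V ω, W ω) with hZdef
  set T : Ω → α × β × γ := fun ω => (U ω, V ω, W ω) with hTdef
  have hZ : Measurable Z := hV.prodMk hW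
  have hT : Measurable T := hU.prodMk (hV.prodMk hW)
  have hmZ : MeasurableSpace.comap Z inferInstance ≤ ‹MeasurableSpace Ω› := hZ.comap_le
  have hmT : MeasurableSpace.comap T inferInstance ≤ ‹MeasurableSpace Ω› := hT.comap_le
  have hZmZ : Measurable[MeasurableSpace.comap Z inferInstance] Z :=
    measurable_iff_comap_le.mpr le_rfl
  haveI : ∀ σ : S, SigmaFinite ((P σ).trim hmZ) := fun σ =>
    haveI : IsFiniteMeasure ((P σ).trim hmZ) := isFiniteMeasure_trim hmZ
    inferInstance
  haveI : ∀ σ : S, SigmaFinite ((P σ).trim hmT) := fun σ =>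
    haveI : IsFiniteMeasure ((P σ).trim hmT) := isFiniteMeasure_trim hmT
    inferInstance
  set M : ℝ := max M₀ 0 with hMdef
  have hgM' : ∀ d, |g d| ≤ M := fun d => (hM₀ d).trans (le_max_left _ _)
  have hM0 : 0 ≤ M := le_max_right _ _
  obtain ⟨u, hu, huae⟩ := hECI₂ g hg ⟨M₀, hM₀⟩
  set u' : α × β × γ → ℝ := fun p => max (-M) (min M (u p)) with hu'def
  have hu' : Measurable u' := measurable_const.max (measurable_const.min hu)
  have hu'bd : ∀ p, |u' p| ≤ M := by
    intro p
    rw [abs_le]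
    refine ⟨le_max_left _ _, max_le (by linarith) (min_le_left _ _)⟩
  have hgY_int : ∀ σ : S, Integrable (fun ω => g (Y ω)) (P σ) := fun σ =>
    Integrable.mono' (integrable_const M) ((hg.comp hY).aestronglyMeasurable)
      (Filter.Eventually.of_forall fun ω => by
        simpa [Real.norm_eq_abs] using hgM' (Y ω))
  have hu'T : ∀ σ : S, (fun ω => u' (T ω)) =ᵐ[P σ] fun ω => u (T ω) := by
    intro σ
    have hbdd : ∀ᵐ ω ∂(P σ),
        |((P σ)[(fun ω => g (Y ω)) | MeasurableSpace.comap T inferInstance]) ω|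
          ≤ ((⟨M, hM0⟩ : NNReal) : ℝ) :=
      ae_bdd_condExp_of_ae_bdd (Filter.Eventually.of_forall fun ω => hgM' (Y ω))
    filter_upwards [huae σ, hbdd] with ω h1 h2
    rw [← h1] at h2
    obtain ⟨hl, hr⟩ := abs_le.mp h2
    show max (-M) (min M (u (T ω))) = u (T ω)
    rw [min_eq_right hr, max_eq_right hl]
  set f₀ : α × β × γ → ℝ≥0∞ := fun p => ENNReal.ofReal (u' p + M) with hf₀def
  have hf₀ : Measurable f₀ := (hu'.add_const M).ennreal_ofReal
  obtain ⟨rt, hrt, hrtint⟩ := stepB P U V W hU hV hW hECI₁ f₀ hf₀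
  set c : ℝ≥0∞ := ENNReal.ofReal (2 * M) with hcdef
  have hbd : ∀ σ : S, (fun ω => rt (Z ω)) ≤ᵐ[P σ] fun _ => c := by
    intro σ
    refine aux_ae_le_of_comap hmZ (P σ) (hrt.comp hZmZ) measurable_const ?_
    rintro s ⟨t', ht', rfl⟩
    rw [hrtint σ t' ht']
    calc ∫⁻ ω in Z ⁻¹' t', f₀ (T ω) ∂(P σ)
        ≤ ∫⁻ _ in Z ⁻¹' t', c ∂(P σ) := by
          refine lintegral_mono fun ω => ENNReal.ofReal_le_ofReal ?_
          have := (abs_le.mp (hu'bd (T ω))).2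
          linarith
      _ = ∫⁻ ω in Z ⁻¹' t', (fun _ => c) ω ∂(P σ) := rfl
  set r : β × γ → ℝ := fun x => (min (rt x) c).toReal - M with hrdef
  have hrmeas : Measurable r := ((hrt.min measurable_const).ennreal_toReal).sub measurable_const
  refine ⟨r, hrmeas, fun σ => ?_⟩
  have hrbd : ∀ x, ‖r x‖ ≤ M := by
    intro x
    have h1 : (min (rt x) c).toReal ≤ 2 * M :=
      ENNReal.toReal_le_of_le_ofReal (by linarith) (min_le_right _ _)
    have h2 : (0:ℝ) ≤ (min (rt x) c).toReal := ENNReal.toReal_nonneg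
    rw [Real.norm_eq_abs, abs_le]
    constructor <;> simp only [hrdef] <;> linarith
  have hr_int : Integrable (fun ω => r (Z ω)) (P σ) :=
    Integrable.mono' (integrable_const M) ((hrmeas.comp hZ).aestronglyMeasurable)
      (Filter.Eventually.of_forall fun ω => hrbd (Z ω))
  have hmin_int : Integrable (fun ω => (min (rt (Z ω)) c).toReal) (P σ) :=
    Integrable.mono' (integrable_const (2 * M))
      (((hrt.min measurable_const).ennreal_toReal.comp hZ).aestronglyMeasurable)
      (Filter.Eventually.of_forall fun ω => by
        rw [Real.norm_eq_abs, abs_of_nonneg ENNReal.toReal_nonneg]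
        exact ENNReal.toReal_le_of_le_ofReal (by linarith) (min_le_right _ _))
  have hu'T_int : Integrable (fun ω => u' (T ω)) (P σ) :=
    Integrable.mono' (integrable_const M) ((hu'.comp hT).aestronglyMeasurable)
      (Filter.Eventually.of_forall fun ω => by
        simpa [Real.norm_eq_abs] using hu'bd (T ω))
  refine ae_eq_condExp_of_forall_setIntegral_eq hmZ (hgY_int σ)
    (fun s _ _ => hr_int.integrableOn) ?_
    ((Measurable.stronglyMeasurable (hrmeas.comp hZmZ)).aestronglyMeasurable)
  rintro s ⟨t, ht, rfl⟩ -
  have hEmeas : MeasurableSet (Z ⁻¹' t) := hZ ht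
  have key : ∫⁻ ω in Z ⁻¹' t, rt (Z ω) ∂(P σ)
      = ∫⁻ ω in Z ⁻¹' t, ENNReal.ofReal (u' (T ω) + M) ∂(P σ) := hrtint σ t ht
  have hLHS : ∫ ω in Z ⁻¹' t, r (Z ω) ∂(P σ)
      = (∫⁻ ω in Z ⁻¹' t, rt (Z ω) ∂(P σ)).toReal - (P σ (Z ⁻¹' t)).toReal * M := by
    have h1 : ∫ ω in Z ⁻¹' t, r (Z ω) ∂(P σ)
        = ∫ ω in Z ⁻¹' t, (min (rt (Z ω)) c).toReal ∂(P σ)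
          - ∫ _ in Z ⁻¹' t, M ∂(P σ) := by
      rw [← integral_sub hmin_int.integrableOn (integrable_const M).integrableOn]
    have hmin_eq : ∫⁻ ω in Z ⁻¹' t, min (rt (Z ω)) c ∂(P σ)
        = ∫⁻ ω in Z ⁻¹' t, rt (Z ω) ∂(P σ) :=
      lintegral_congr_ae (ae_restrict_of_ae ((hbd σ).mono fun ω h => min_eq_left h))
    have h2 : ∫ ω in Z ⁻¹' t, (min (rt (Z ω)) c).toReal ∂(P σ)
        = (∫⁻ ω in Z ⁻¹' t, rt (Z ω) ∂(P σ)).toReal := by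
      rw [integral_toReal (f := fun ω => min (rt (Z ω)) c)
        (((hrt.min measurable_const).comp hZ).aemeasurable.restrict)
        (Filter.Eventually.of_forall fun ω =>
          lt_of_le_of_lt (min_le_right _ _) ENNReal.ofReal_lt_top), hmin_eq]
    rw [h1, h2, setIntegral_const, smul_eq_mul, measureReal_def]
  have hRHS : ∫ ω in Z ⁻¹' t, g (Y ω) ∂(P σ)
      = (∫⁻ ω in Z ⁻¹' t, ENNReal.ofReal (u' (T ω) + M) ∂(P σ)).toReal
        - (P σ (Z ⁻¹' t)).toReal * M := by
    have htT : MeasurableSet[MeasurableSpace.comap T inferInstance] (Z ⁻¹' t) :=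
      ⟨Prod.snd ⁻¹' t, measurable_snd ht, rfl⟩
    have h1 : ∫ ω in Z ⁻¹' t, g (Y ω) ∂(P σ) = ∫ ω in Z ⁻¹' t, u (T ω) ∂(P σ) := by
      rw [← setIntegral_condExp hmT (hgY_int σ) htT]
      exact setIntegral_congr_ae hEmeas ((huae σ).symm.mono fun ω h _ => h)
    have h2 : ∫ ω in Z ⁻¹' t, u (T ω) ∂(P σ) = ∫ ω in Z ⁻¹' t, u' (T ω) ∂(P σ) :=
      setIntegral_congr_ae hEmeas ((hu'T σ).symm.mono fun ω h _ => h)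
    have h3 : ∫ ω in Z ⁻¹' t, (u' (T ω) + M) ∂(P σ)
        = ∫ ω in Z ⁻¹' t, u' (T ω) ∂(P σ) + (P σ (Z ⁻¹' t)).toReal * M := by
      rw [integral_add hu'T_int.integrableOn (integrable_const M).integrableOn,
        setIntegral_const, smul_eq_mul, measureReal_def]
    have h4 : ∫ ω in Z ⁻¹' t, (u' (T ω) + M) ∂(P σ)
        = (∫⁻ ω in Z ⁻¹' t, ENNReal.ofReal (u' (T ω) + M) ∂(P σ)).toReal :=
      integral_eq_lintegral_of_nonneg_ae
        (Filter.Eventually.of_forall fun ω => by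
          have := (abs_le.mp (hu'bd (T ω))).1
          show (0 : Ω → ℝ) ω ≤ u' (T ω) + M
          simp only [Pi.zero_apply]
          linarith)
        ((hu'.comp hT).add_const M).aestronglyMeasurable.restrict
    rw [h1, h2]
    linarith [h3, h4]
  rw [hLHS, hRHS, key]

end Main


/-- extended contraction/decomposition: if `U ⫫ Σ | (V, W)` and
`Y ⫫ Σ | (U, V, W)`, then `Y ⫫ Σ | (V, W)`: for every bounded measurable `g` there is a single
measurable `r_g` such that `r_g(V, W)` is a version of `E_{P_σ}[g(Y) | σ(V, W)]` for every
`σ ∈ S`. -/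
theorem extended_condIndep_contraction_decomposition
    {Ω S α β γ δ : Type*} [MeasurableSpace Ω] [Finite S] [Nonempty S]
    [MeasurableSpace α] [StandardBorelSpace α]
    [MeasurableSpace β] [StandardBorelSpace β]
    [MeasurableSpace γ] [StandardBorelSpace γ]
    [MeasurableSpace δ] [StandardBorelSpace δ]
    (P : S → Measure Ω) [∀ σ, IsProbabilityMeasure (P σ)]
    (U : Ω → α) (V : Ω → β) (W : Ω → γ) (Y : Ω → δ)
    (hU : Measurable U) (hV : Measurable V) (hW : Measurable W) (hY : Measurable Y)
    -- (i): U ⫫ Σ | (V, W)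
    (hECI₁ : ∀ h : α → ℝ, Measurable h → (∃ M, ∀ a, |h a| ≤ M) →
      ∃ w : β × γ → ℝ, Measurable w ∧ ∀ σ : S,
        (fun ω => w (V ω, W ω)) =ᵐ[P σ]
          (P σ)[(fun ω => h (U ω)) |
            MeasurableSpace.comap (fun ω => (V ω, W ω)) inferInstance])
    -- (ii): Y ⫫ Σ | (U, V, W)
    (hECI₂ : ∀ g : δ → ℝ, Measurable g → (∃ M, ∀ d, |g d| ≤ M) →
      ∃ u : α × β × γ → ℝ, Measurable u ∧ ∀ σ : S,
        (fun ω => u (U ω, V ω, W ω)) =ᵐ[P σ]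
          (P σ)[(fun ω => g (Y ω)) |
            MeasurableSpace.comap (fun ω => (U ω, V ω, W ω)) inferInstance]) :
    -- conclusion: Y ⫫ Σ | (V, W)
    ∀ g : δ → ℝ, Measurable g → (∃ M, ∀ d, |g d| ≤ M) →
      ∃ r : β × γ → ℝ, Measurable r ∧ ∀ σ : S,
        (fun ω => r (V ω, W ω)) =ᵐ[P σ]
          (P σ)[(fun ω => g (Y ω)) |
            MeasurableSpace.comap (fun ω => (V ω, W ω)) inferInstance] := by
  exact extended_condIndep_contraction_decomposition' P U V W hU hV hW Y hY hECI₁ hECI₂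
end

section
/- Let C, X, T be random variables on a measurable space (Ω, 𝓕) with C valued in a standard Borel space 𝒞, X in ℝ and T in {0,1}, and let P₀, P₁, Pₛ be probability measures with P₀(T=0)=1 and P₁(T=1)=1. Assume: (4a) the joint law of (C, X) is the same under P₀, P₁ and Pₛ; and (sharp condition) for every σ ∈ {0, 1, s} and every bounded measurable h : {0,1} → ℝ, E_{P_σ}[h(T) | σ(C, X)] = E_{P_σ}[h(T) | σ(X)] P_σ-almost surely. Then C ⫫ Σ | (X, T): for every bounded measurable real-valued function h on 𝒞 there exists a single measurable function w : ℝ×{0,1} → ℝ such that w(X, T) is a version of E_{P_σ}[h(C) | σ(X, T)] simultaneously for every σ ∈ {0, 1, s}. -/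
open MeasureTheory

private lemma fin2_eq_zero_or_one (t : Fin 2) : t = 0 ∨ t = 1 := by
  fin_cases t <;> simp

private lemma integrable_of_bdd' {α : Type*} [MeasurableSpace α] {μ : Measure α}
    [IsFiniteMeasure μ] {f : α → ℝ} {K : ℝ} (hf : AEStronglyMeasurable f μ)
    (hb : ∀ x, |f x| ≤ K) : Integrable f μ :=
  ⟨hf, HasFiniteIntegral.of_bounded (C := K)
    (Filter.Eventually.of_forall fun x => by simpa using hb x)⟩

private def mComap {Ω β : Type*} [MeasurableSpace β] (f : Ω → β) : MeasurableSpace Ω :=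
  MeasurableSpace.comap f inferInstance

/-- Pull-out identity for integrals against a conditional expectation. -/
private lemma integral_mul_condexp_eq {Ω : Type*} {m m0 : MeasurableSpace Ω}
    (hm : m ≤ m0) (μ : Measure Ω) [IsProbabilityMeasure μ] {f u : Ω → ℝ}
    (hf : StronglyMeasurable[m] f) {c : ℝ} (hfb : ∀ᵐ ω ∂μ, ‖f ω‖ ≤ c)
    (hu : Integrable u μ) :
    ∫ ω, f ω * u ω ∂μ = ∫ ω, f ω * (μ[u|m]) ω ∂μ := by
  have hfu : Integrable (fun ω => f ω * u ω) μ :=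
    hu.bdd_mul (hf.mono hm).aestronglyMeasurable hfb
  have h1 : μ[f * u|m] =ᵐ[μ] f * μ[u|m] :=
    condExp_stronglyMeasurable_mul_of_bound hm hf hu c hfb
  have h2 : ∫ ω, (μ[f * u|m]) ω ∂μ = ∫ ω, (f * u) ω ∂μ := integral_condExp hm (f := f * u)
  calc ∫ ω, f ω * u ω ∂μ = ∫ ω, (f * u) ω ∂μ := rfl
    _ = ∫ ω, (μ[f * u|m]) ω ∂μ := h2.symm
    _ = ∫ ω, (f * μ[u|m]) ω ∂μ := integral_congr_ae h1
    _ = ∫ ω, f ω * (μ[u|m]) ω ∂μ := rfl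

/-- key step (10) in the proof of Theorem 4.4: covariates `(C, X)` with
regime-independent joint law plus the sharp-design condition `T ⫫ C | (X, Σ)` imply
`C ⫫ Σ | (X, T)`: for every bounded measurable `h` on `𝒞` there is a single measurable
`w : ℝ × {0,1} → ℝ` such that `w(X, T)` is a version of `E_{P_σ}[h(C) | σ(X, T)]` in every
regime `σ ∈ {0, 1, s}`. -/
theorem sharp_rdd_C_indep_regime_given_XT
    {Ω 𝒞 : Type*} [MeasurableSpace Ω] [MeasurableSpace 𝒞] [StandardBorelSpace 𝒞]
    (C : Ω → 𝒞) (X : Ω → ℝ) (T : Ω → Fin 2)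
    (hC : Measurable C) (hX : Measurable X) (hT : Measurable T)
    (P₀ P₁ Ps : Measure Ω)
    [IsProbabilityMeasure P₀] [IsProbabilityMeasure P₁] [IsProbabilityMeasure Ps]
    (hT0 : P₀ {ω | T ω = 0} = 1) (hT1 : P₁ {ω | T ω = 1} = 1)
    -- (4a): the joint law of (C, X) is the same in all three regimes
    (h4a : Measure.map (fun ω => (C ω, X ω)) P₀ = Measure.map (fun ω => (C ω, X ω)) P₁ ∧
           Measure.map (fun ω => (C ω, X ω)) P₀ = Measure.map (fun ω => (C ω, X ω)) Ps)
    -- sharp condition: in every regime, for every bounded measurable h : {0,1} → ℝ,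
    -- E_{P_σ}[h(T) | σ(C, X)] = E_{P_σ}[h(T) | σ(X)] a.s.
    (hsharp : ∀ P ∈ ({P₀, P₁, Ps} : Set (Measure Ω)), ∀ h : Fin 2 → ℝ,
      P[(fun ω => h (T ω)) | MeasurableSpace.comap (fun ω => (C ω, X ω)) inferInstance]
        =ᵐ[P] P[(fun ω => h (T ω)) | MeasurableSpace.comap X inferInstance]) :
    ∀ h : 𝒞 → ℝ, Measurable h → (∃ M, ∀ c, |h c| ≤ M) →
      ∃ w : ℝ × Fin 2 → ℝ, Measurable w ∧
        ∀ P ∈ ({P₀, P₁, Ps} : Set (Measure Ω)),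
          (fun ω => w (X ω, T ω)) =ᵐ[P]
            P[(fun ω => h (C ω)) |
              MeasurableSpace.comap (fun ω => (X ω, T ω)) inferInstance] := by
  intro h hmeas hbdd
  obtain ⟨M, hM⟩ := hbdd
  -- Ω and 𝒞 are nonempty
  haveI hΩne : Nonempty Ω := by
    by_contra hemp
    have : (Set.univ : Set Ω) = ∅ := Set.univ_eq_empty_iff.mpr (not_nonempty_iff.mp hemp)
    have h1 : P₀ Set.univ = 1 := measure_univ
    rw [this] at h1
    simp at h1
  haveI h𝒞ne : Nonempty 𝒞 := ⟨C (Classical.arbitrary Ω)⟩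
  have hM0 : 0 ≤ M := le_trans (abs_nonneg _) (hM (Classical.arbitrary 𝒞))
  -- the common joint law of (X, C)
  set ρ : Measure (ℝ × 𝒞) := Measure.map (fun ω => (X ω, C ω)) P₀ with hρdef
  haveI : IsProbabilityMeasure ρ :=
    Measure.isProbabilityMeasure_map (hX.prodMk hC).aemeasurable
  have hswap : ∀ Q : Measure Ω, Measure.map (fun ω => (X ω, C ω)) Q
      = Measure.map Prod.swap (Measure.map (fun ω => (C ω, X ω)) Q) := fun Q => by
    rw [Measure.map_map measurable_swap (hC.prodMk hX)]; rfl
  have hρ : ∀ P ∈ ({P₀, P₁, Ps} : Set (Measure Ω)),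
      Measure.map (fun ω => (X ω, C ω)) P = ρ := by
    intro P hP
    simp only [Set.mem_insert_iff, Set.mem_singleton_iff] at hP
    rcases hP with rfl | rfl | rfl
    · rfl
    · rw [hρdef, hswap, hswap, h4a.1]
    · rw [hρdef, hswap, hswap, h4a.2]
  -- the candidate function g
  set g : ℝ → ℝ := fun x => ∫ c, h c ∂(ρ.condKernel x) with hgdef
  have hgsm : StronglyMeasurable g := by
    have huc : StronglyMeasurable (Function.uncurry fun (_ : ℝ) (c : 𝒞) => h c) :=
      (hmeas.comp measurable_snd).stronglyMeasurable
    exact huc.integral_kernel_prod_right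
  have hgbd : ∀ x, |g x| ≤ M := by
    intro x
    have : ‖∫ c, h c ∂(ρ.condKernel x)‖ ≤ M * ((ρ.condKernel x) Set.univ).toReal :=
      norm_integral_le_of_norm_le_const (Filter.Eventually.of_forall fun c => by
        simpa [Real.norm_eq_abs] using hM c)
    simpa [Real.norm_eq_abs] using this
  -- σ-algebras
  have hmX : mComap X ≤ ‹MeasurableSpace Ω› := hX.comap_le
  have hmXT : mComap (fun ω => (X ω, T ω)) ≤ ‹MeasurableSpace Ω› := (hX.prodMk hT).comap_le
  have hmCX : mComap (fun ω => (C ω, X ω)) ≤ ‹MeasurableSpace Ω› := (hC.prodMk hX).comap_le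
  have hXleXT : mComap X ≤ mComap (fun ω => (X ω, T ω)) := by
    have heq : mComap X = MeasurableSpace.comap (fun ω => (X ω, T ω))
        (MeasurableSpace.comap Prod.fst inferInstance) := by
      rw [MeasurableSpace.comap_comp]; rfl
    rw [heq]
    exact MeasurableSpace.comap_mono measurable_fst.comap_le
  have hXleCX : mComap X ≤ mComap (fun ω => (C ω, X ω)) := by
    have heq : mComap X = MeasurableSpace.comap (fun ω => (C ω, X ω))
        (MeasurableSpace.comap Prod.snd inferInstance) := by
      rw [MeasurableSpace.comap_comp]; rfl
    rw [heq]
    exact MeasurableSpace.comap_mono measurable_snd.comap_le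
  -- g ∘ X is mX-measurable
  have hgX_mX : Measurable[mComap X] fun ω => g (X ω) :=
    hgsm.measurable.comp (Measurable.of_comap_le le_rfl)
  -- integrability of the basic functions
  have hhC_int : ∀ (P : Measure Ω) [IsProbabilityMeasure P],
      Integrable (fun ω => h (C ω)) P := fun P _ =>
    integrable_of_bdd' ((hmeas.comp hC : Measurable fun ω => h (C ω)).aestronglyMeasurable) (fun ω => hM (C ω))
  have hgX_int : ∀ (P : Measure Ω) [IsProbabilityMeasure P],
      Integrable (fun ω => g (X ω)) P := fun P _ =>
    integrable_of_bdd'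
      ((hgsm.measurable.comp hX : Measurable fun ω => g (X ω)).aestronglyMeasurable)
      (fun ω => hgbd (X ω))
  -- Key lemma A: g(X) has the same set integrals as h(C) on σ(X)-sets
  have keyA : ∀ (P : Measure Ω) [IsProbabilityMeasure P],
      Measure.map (fun ω => (X ω, C ω)) P = ρ → ∀ B : Set ℝ, MeasurableSet B →
      ∫ ω in X ⁻¹' B, g (X ω) ∂P = ∫ ω in X ⁻¹' B, h (C ω) ∂P := by
    intro P _ hPρ B hB
    have hfst : ρ.fst = Measure.map X P := by
      rw [← hPρ, Measure.fst_map_prodMk hC]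
    have hint2 : Integrable (fun p : ℝ × 𝒞 => h p.2) ρ :=
      integrable_of_bdd'
        ((hmeas.comp measurable_snd : Measurable fun p : ℝ × 𝒞 => h p.2).aestronglyMeasurable)
        (fun p => hM p.2)
    have h1 : ∫ ω in X ⁻¹' B, g (X ω) ∂P = ∫ x in B, g x ∂(Measure.map X P) :=
      (setIntegral_map hB hgsm.aestronglyMeasurable hX.aemeasurable).symm
    have h2 : ∫ x in B, g x ∂ρ.fst = ∫ p in B ×ˢ Set.univ, h p.2 ∂ρ := by
      rw [← Measure.setIntegral_condKernel_univ_right hB hint2.integrableOn]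
    have hpre : (fun ω => (X ω, C ω)) ⁻¹' (B ×ˢ Set.univ) = X ⁻¹' B := by
      ext ω; simp
    have h3 : ∫ p in B ×ˢ Set.univ, h p.2 ∂ρ = ∫ ω in X ⁻¹' B, h (C ω) ∂P := by
      rw [← hPρ, setIntegral_map (f := fun p : ℝ × 𝒞 => h p.2) (hB.prod MeasurableSet.univ)
        ((hmeas.comp measurable_snd : Measurable fun p : ℝ × 𝒞 => h p.2).aestronglyMeasurable)
        ((hX.prodMk hC).aemeasurable), hpre]
    rw [h1, ← hfst, h2, h3]
  -- g ∘ X is a version of E[h(C) | σ(X)] under each regime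
  have keyX : ∀ (P : Measure Ω) [IsProbabilityMeasure P],
      Measure.map (fun ω => (X ω, C ω)) P = ρ →
      (fun ω => g (X ω)) =ᵐ[P] P[(fun ω => h (C ω)) | mComap X] := by
    intro P _ hPρ
    refine ae_eq_condExp_of_forall_setIntegral_eq hmX (hhC_int P)
      (fun s _ _ => (hgX_int P).integrableOn) ?_
      (hgX_mX.stronglyMeasurable.aestronglyMeasurable)
    intro s hs _
    obtain ⟨B, hB, rfl⟩ := hs
    exact keyA P hPρ B hB
  -- The star identity: equality of integrals on sets of the form {X ∈ B} ∩ {T = t}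
  have star : ∀ P ∈ ({P₀, P₁, Ps} : Set (Measure Ω)), ∀ (t : Fin 2) (B : Set ℝ),
      MeasurableSet B →
      ∫ ω in X ⁻¹' B ∩ T ⁻¹' {t}, g (X ω) ∂P = ∫ ω in X ⁻¹' B ∩ T ⁻¹' {t}, h (C ω) ∂P := by
    -- first, the degenerate regimes
    have degen : ∀ (P : Measure Ω) [IsProbabilityMeasure P],
        Measure.map (fun ω => (X ω, C ω)) P = ρ → ∀ t₀ : Fin 2, P (T ⁻¹' {t₀}) = 1 →
        ∀ (t : Fin 2) (B : Set ℝ), MeasurableSet B →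
        ∫ ω in X ⁻¹' B ∩ T ⁻¹' {t}, g (X ω) ∂P
          = ∫ ω in X ⁻¹' B ∩ T ⁻¹' {t}, h (C ω) ∂P := by
      intro P _ hPρ t₀ ht₀ t B hB
      have hcompl : P ((T ⁻¹' {t₀})ᶜ) = 0 := by
        have := measure_compl (hT (measurableSet_singleton t₀)) (measure_ne_top P _)
        rw [ht₀, measure_univ] at this
        simpa using this
      by_cases htt : t = t₀
      · subst htt
        have hae : (X ⁻¹' B ∩ T ⁻¹' {t} : Set Ω) =ᵐ[P] (X ⁻¹' B : Set Ω) := by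
          rw [MeasureTheory.ae_eq_set]
          constructor
          · rw [Set.diff_eq_empty.mpr Set.inter_subset_left]
            simp
          · refine measure_mono_null (fun ω hω => ?_) hcompl
            simp only [Set.mem_diff, Set.mem_inter_iff, not_and, Set.mem_preimage] at hω
            exact hω.2 hω.1
        rw [setIntegral_congr_set hae, setIntegral_congr_set hae]
        exact keyA P hPρ B hB
      · have hzero : P (X ⁻¹' B ∩ T ⁻¹' {t}) = 0 := by
          refine measure_mono_null ?_ hcompl
          intro ω hω
          simp only [Set.mem_inter_iff, Set.mem_preimage, Set.mem_singleton_iff] at hω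
          simp only [Set.mem_compl_iff, Set.mem_preimage, Set.mem_singleton_iff]
          intro hc; exact htt (hω.2 ▸ hc ▸ rfl)
        rw [Measure.restrict_eq_zero.mpr hzero]
        simp
    intro P hP t B hB
    have hPρ' := hρ P hP
    simp only [Set.mem_insert_iff, Set.mem_singleton_iff] at hP
    rcases hP with rfl | rfl | rfl
    · exact degen P hPρ' 0 hT0 t B hB
    · exact degen P hPρ' 1 hT1 t B hB
    -- the sharp (observational) regime: use the conditional-independence hypothesis
    · set e : Fin 2 → ℝ := fun t' => if t' = t then (1 : ℝ) else 0 with hedef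
      have hsharpP : P[(fun ω => e (T ω)) | mComap (fun ω => (C ω, X ω))] =ᵐ[P] P[(fun ω => e (T ω)) | mComap X] :=
        hsharp P (by simp) e
      have hebd : ∀ ω, |e (T ω)| ≤ (1 : ℝ) := fun ω => by
        by_cases h' : T ω = t <;> simp [hedef, h']
      have heT_int : Integrable (fun ω => e (T ω)) P :=
        integrable_of_bdd' (K := 1)
          (((measurable_from_top (f := e)).comp hT).aestronglyMeasurable) hebd
      set ψ : Ω → ℝ := P[(fun ω => e (T ω)) | mComap X] with hψdef
      have hψsm : StronglyMeasurable[mComap X] ψ := stronglyMeasurable_condExp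
      have hψbd : ∀ᵐ ω ∂P, |ψ ω| ≤ (1 : ℝ) := by
        have := ae_bdd_condExp_of_ae_bdd (m := mComap X) (μ := P) (R := 1)
          (f := fun ω => e (T ω))
          (Filter.Eventually.of_forall fun ω => by simpa using hebd ω)
        simpa using this
      -- the indicator function of {X ∈ B}
      set b : Ω → ℝ := (X ⁻¹' B).indicator (fun _ => (1 : ℝ)) with hbdef
      have hbmX : StronglyMeasurable[mComap X] b :=
        stronglyMeasurable_const.indicator ⟨B, hB, rfl⟩
      have hbbd : ∀ ω, |b ω| ≤ (1 : ℝ) := fun ω => by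
        by_cases h' : ω ∈ X ⁻¹' B <;> simp [hbdef, h']
      -- reduce set integrals over {X∈B} ∩ {T=t} to integrals of products
      have hind : ∀ f : Ω → ℝ,
          ∫ ω in X ⁻¹' B ∩ T ⁻¹' {t}, f ω ∂P = ∫ ω, (b ω * f ω) * e (T ω) ∂P := by
        intro f
        have hms : MeasurableSet (X ⁻¹' B ∩ T ⁻¹' {t}) :=
          (hX hB).inter (hT (measurableSet_singleton t))
        rw [← integral_indicator hms]
        refine integral_congr_ae (Filter.Eventually.of_forall fun ω => ?_)
        by_cases h1 : ω ∈ X ⁻¹' B <;> by_cases h2 : T ω = t <;>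
          simp [hbdef, hedef, h1, h2, Set.indicator_apply]
      -- measurability and bounds for the product factors
      have hgX_smX : StronglyMeasurable[mComap X] fun ω => g (X ω) := hgX_mX.stronglyMeasurable
      have hbg : StronglyMeasurable[mComap X] fun ω => b ω * g (X ω) := hbmX.mul hgX_smX
      have hbg_bd : ∀ᵐ ω ∂P, ‖b ω * g (X ω)‖ ≤ M :=
        Filter.Eventually.of_forall fun ω => by
          rw [Real.norm_eq_abs, abs_mul]
          calc |b ω| * |g (X ω)| ≤ 1 * M :=
                mul_le_mul (hbbd ω) (hgbd (X ω)) (abs_nonneg _) zero_le_one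
            _ = M := one_mul M
      have hhC_smCX : StronglyMeasurable[mComap (fun ω => (C ω, X ω))] fun ω => h (C ω) :=
        ((hmeas.comp measurable_fst).comp
          (Measurable.of_comap_le (le_refl (mComap fun ω => (C ω, X ω))))).stronglyMeasurable
      have hbh : StronglyMeasurable[mComap (fun ω => (C ω, X ω))] fun ω => b ω * h (C ω) :=
        (hbmX.mono hXleCX).mul hhC_smCX
      have hbh_bd : ∀ᵐ ω ∂P, ‖b ω * h (C ω)‖ ≤ M :=
        Filter.Eventually.of_forall fun ω => by
          rw [Real.norm_eq_abs, abs_mul]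
          calc |b ω| * |h (C ω)| ≤ 1 * M :=
                mul_le_mul (hbbd ω) (hM (C ω)) (abs_nonneg _) zero_le_one
            _ = M := one_mul M
      have hbψ : StronglyMeasurable[mComap X] fun ω => b ω * ψ ω := hbmX.mul hψsm
      have hbψ_bd : ∀ᵐ ω ∂P, ‖b ω * ψ ω‖ ≤ (1 : ℝ) := by
        filter_upwards [hψbd] with ω hω
        rw [Real.norm_eq_abs, abs_mul]
        calc |b ω| * |ψ ω| ≤ 1 * 1 :=
              mul_le_mul (hbbd ω) hω (abs_nonneg _) zero_le_one
          _ = 1 := one_mul 1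
      -- the chain of equalities
      calc ∫ ω in X ⁻¹' B ∩ T ⁻¹' {t}, g (X ω) ∂P
          = ∫ ω, (b ω * g (X ω)) * e (T ω) ∂P := hind _
        _ = ∫ ω, (b ω * g (X ω)) * ψ ω ∂P :=
            integral_mul_condexp_eq hmX P hbg hbg_bd heT_int
        _ = ∫ ω, (b ω * ψ ω) * g (X ω) ∂P := by
            refine integral_congr_ae (Filter.Eventually.of_forall fun ω => ?_); ring
        _ = ∫ ω, (b ω * ψ ω) * (P[(fun ω => h (C ω)) | mComap X]) ω ∂P := by
            refine integral_congr_ae ?_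
            filter_upwards [keyX P (hρ P (by simp))] with ω hω
            rw [hω]
        _ = ∫ ω, (b ω * ψ ω) * h (C ω) ∂P :=
            (integral_mul_condexp_eq hmX P hbψ hbψ_bd (hhC_int P)).symm
        _ = ∫ ω, (b ω * h (C ω)) * ψ ω ∂P := by
            refine integral_congr_ae (Filter.Eventually.of_forall fun ω => ?_); ring
        _ = ∫ ω, (b ω * h (C ω)) * (P[(fun ω => e (T ω)) | mComap (fun ω => (C ω, X ω))]) ω ∂P := by
            refine integral_congr_ae ?_
            filter_upwards [hsharpP] with ω hω
            rw [hω]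
        _ = ∫ ω, (b ω * h (C ω)) * e (T ω) ∂P :=
            (integral_mul_condexp_eq hmCX P hbh hbh_bd heT_int).symm
        _ = ∫ ω in X ⁻¹' B ∩ T ⁻¹' {t}, h (C ω) ∂P := (hind _).symm
  -- finish: apply uniqueness of conditional expectation w.r.t. σ(X, T)
  refine ⟨fun p => g p.1, hgsm.measurable.comp measurable_fst, ?_⟩
  intro P hP
  haveI : IsProbabilityMeasure P := by
    simp only [Set.mem_insert_iff, Set.mem_singleton_iff] at hP
    rcases hP with rfl | rfl | rfl <;> infer_instance
  refine ae_eq_condExp_of_forall_setIntegral_eq hmXT (hhC_int P)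
    (fun s _ _ => (hgX_int P).integrableOn) ?_
    ((hgX_mX.mono hXleXT le_rfl).stronglyMeasurable.aestronglyMeasurable)
  intro s hs _
  obtain ⟨S, hS, rfl⟩ := hs
  -- decompose S according to the value of T
  set S0 : Set ℝ := (fun x => (x, (0 : Fin 2))) ⁻¹' S with hS0def
  set S1 : Set ℝ := (fun x => (x, (1 : Fin 2))) ⁻¹' S with hS1def
  have hS0 : MeasurableSet S0 := (measurable_id.prodMk measurable_const) hS
  have hS1 : MeasurableSet S1 := (measurable_id.prodMk measurable_const) hS
  have hsplit : (fun ω => (X ω, T ω)) ⁻¹' S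
      = (X ⁻¹' S0 ∩ T ⁻¹' {0}) ∪ (X ⁻¹' S1 ∩ T ⁻¹' {1}) := by
    ext ω
    rcases fin2_eq_zero_or_one (T ω) with h0 | h1
    · simp [hS0def, hS1def, h0]
    · simp [hS0def, hS1def, h1]
  have hdisj : Disjoint (X ⁻¹' S0 ∩ T ⁻¹' {0}) (X ⁻¹' S1 ∩ T ⁻¹' {1}) := by
    rw [Set.disjoint_left]
    rintro ω ⟨-, h0⟩ ⟨-, h1⟩
    simp only [Set.mem_preimage, Set.mem_singleton_iff] at h0 h1
    rw [h0] at h1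
    exact absurd h1 (by decide)
  have hm1 : MeasurableSet (X ⁻¹' S1 ∩ T ⁻¹' {1}) :=
    (hX hS1).inter (hT (measurableSet_singleton 1))
  rw [hsplit,
    setIntegral_union hdisj hm1 (hgX_int P).integrableOn (hgX_int P).integrableOn,
    setIntegral_union hdisj hm1 (hhC_int P).integrableOn (hhC_int P).integrableOn,
    star P hP 0 S0 hS0, star P hP 1 S1 hS1]
end

section
/- Let C, X, T, Y be random variables on a measurable space (Ω, 𝓕) with C valued in a standard Borel space 𝒞, X in ℝ, T in {0,1}, Y in ℝ, and let P₀, P₁, P_f be probability measures with P₀(T=0)=1, P₁(T=1)=1, Y integrable under each, and suppose (C, X) are strongly sufficient covariates: the joint law of (C, X) is the same under P₀, P₁, P_f; some measurable u(C, X, T) is simultaneously a version of E_{P_σ}[Y | σ(C, X, T)] for all σ ∈ {0, 1, f}; and P_f(T = t | C, X) > 0 a.s. for t = 0, 1. Let k : 𝒞×ℝ×{0,1} → ℝ be measurable with k(C, X, T) a version of E_{P_f}[Y | σ(C, X, T)]. Then for each t ∈ {0, 1}, any measurable m_t : ℝ → ℝ such that m_t(X) is a version of E_{P_t}[Y | σ(X)]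 satisfies: m_t(X) is a version of E_{P_f}[k(C, X, t) | σ(X)] under P_f. -/
open MeasureTheory

lemma fuzzy_rdd_aux {Ω 𝒞 : Type*} [MeasurableSpace Ω] [MeasurableSpace 𝒞]
    (C : Ω → 𝒞) (X : Ω → ℝ) (T : Ω → Fin 2) (Y : Ω → ℝ)
    (hC : Measurable C) (hX : Measurable X) (hT : Measurable T)
    (Pt Pf : Measure Ω) [IsProbabilityMeasure Pt] [IsProbabilityMeasure Pf]
    (t : Fin 2) (hTt : Pt {ω | T ω = t} = 1)
    (hlaw : Measure.map (fun ω => (C ω, X ω)) Pt = Measure.map (fun ω => (C ω, X ω)) Pf)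
    (u : 𝒞 × ℝ × Fin 2 → ℝ) (hu : Measurable u)
    (hut : (fun ω => u (C ω, X ω, T ω)) =ᵐ[Pt]
      Pt[Y | MeasurableSpace.comap (fun ω => (C ω, X ω, T ω)) inferInstance])
    (huf : (fun ω => u (C ω, X ω, T ω)) =ᵐ[Pf]
      Pf[Y | MeasurableSpace.comap (fun ω => (C ω, X ω, T ω)) inferInstance])
    (q : 𝒞 × ℝ → ℝ) (hq : Measurable q)
    (hq_ver : (fun ω => q (C ω, X ω)) =ᵐ[Pf]
      Pf[(fun ω => if T ω = t then (1:ℝ) else 0) |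
        MeasurableSpace.comap (fun ω => (C ω, X ω)) inferInstance])
    (hq_pos : ∀ᵐ ω ∂Pf, 0 < q (C ω, X ω))
    (k : 𝒞 × ℝ × Fin 2 → ℝ) (hk_meas : Measurable k)
    (hk : (fun ω => k (C ω, X ω, T ω)) =ᵐ[Pf]
      Pf[Y | MeasurableSpace.comap (fun ω => (C ω, X ω, T ω)) inferInstance])
    (mt : ℝ → ℝ) (hmt : Measurable mt)
    (hver : (fun ω => mt (X ω)) =ᵐ[Pt] Pt[Y | MeasurableSpace.comap X inferInstance]) :
    (fun ω => mt (X ω)) =ᵐ[Pf]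
      Pf[(fun ω => k (C ω, X ω, t)) | MeasurableSpace.comap X inferInstance] := by
  -- notation
  set Z : Ω → 𝒞 × ℝ := fun ω => (C ω, X ω) with hZdef
  set W : Ω → 𝒞 × ℝ × Fin 2 := fun ω => (C ω, X ω, T ω) with hWdef
  have hZ : Measurable Z := hC.prodMk hX
  have hW : Measurable W := hC.prodMk (hX.prodMk hT)
  have hmX : MeasurableSpace.comap X inferInstance ≤ ‹MeasurableSpace Ω› := hX.comap_le
  have hmZ : MeasurableSpace.comap Z inferInstance ≤ ‹MeasurableSpace Ω› := hZ.comap_le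
  have hmW : MeasurableSpace.comap W inferInstance ≤ ‹MeasurableSpace Ω› := hW.comap_le
  have hXW : MeasurableSpace.comap X inferInstance ≤
      MeasurableSpace.comap W inferInstance := by
    rintro s ⟨A, hA, rfl⟩
    exact ⟨(fun w : 𝒞 × ℝ × Fin 2 => w.2.1) ⁻¹' A,
      (measurable_fst.comp measurable_snd) hA, rfl⟩
  set kt : 𝒞 × ℝ → ℝ := fun z => k (z.1, z.2, t) with hktdef
  set ut : 𝒞 × ℝ → ℝ := fun z => u (z.1, z.2, t) with hutdef
  have hkt_meas : Measurable kt :=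
    hk_meas.comp (measurable_fst.prodMk (measurable_snd.prodMk measurable_const))
  have hut_meas : Measurable ut :=
    hu.comp (measurable_fst.prodMk (measurable_snd.prodMk measurable_const))
  have hTset : MeasurableSet {ω | T ω = t} := hT (measurableSet_singleton t)
  have hTa : ∀ᵐ ω ∂Pt, T ω = t := by
    rw [ae_iff]
    have : {ω | ¬ T ω = t} = {ω | T ω = t}ᶜ := rfl
    rw [this]
    exact (prob_compl_eq_zero_iff hTset).2 hTt
  -- Step A: kt = ut a.e. w.r.t. the (common) law of Z
  set μ : Measure (𝒞 × ℝ) := Measure.map Z Pf with hμdef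
  haveI : IsProbabilityMeasure μ := Measure.isProbabilityMeasure_map hZ.aemeasurable
  set N : Set (𝒞 × ℝ) := {z | kt z ≠ ut z} with hNdef
  have hNmeas : MeasurableSet N := (measurableSet_eq_fun hkt_meas hut_meas).compl
  have h0 : Pf {ω | ¬ k (W ω) = u (W ω)} = 0 := ae_iff.mp (hk.trans huf.symm)
  have hinter : Pf (Z ⁻¹' N ∩ {ω | T ω = t}) = 0 := by
    refine measure_mono_null ?_ h0
    rintro ω ⟨hω1, hω2⟩
    simp only [Set.mem_preimage, hNdef, Set.mem_setOf_eq] at hω1 ⊢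
    simp only [Set.mem_setOf_eq] at hω2
    simp only [hWdef, hktdef, hutdef, hω2] at hω1 ⊢
    exact hω1
  have hind_int : Integrable (fun ω => if T ω = t then (1:ℝ) else 0) Pf := by
    have := (integrable_const (1:ℝ)).indicator (μ := Pf) hTset
    refine this.congr (Filter.Eventually.of_forall fun ω => ?_)
    simp [Set.indicator_apply]
  have hZN : MeasurableSet[MeasurableSpace.comap Z inferInstance] (Z ⁻¹' N) :=
    ⟨N, hNmeas, rfl⟩
  have hind : ∫ ω in Z ⁻¹' N, (if T ω = t then (1:ℝ) else 0) ∂Pf = 0 := by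
    have heq : (fun ω => if T ω = t then (1:ℝ) else 0) =
        Set.indicator {ω | T ω = t} (fun _ => 1) := by
      funext ω; simp [Set.indicator_apply]
    rw [heq, setIntegral_indicator hTset, setIntegral_const, measureReal_def, hinter]
    simp
  have hqint : Integrable (fun ω => q (Z ω)) Pf := integrable_condExp.congr hq_ver.symm
  have hqN : ∫ ω in Z ⁻¹' N, q (Z ω) ∂Pf = 0 := by
    calc ∫ ω in Z ⁻¹' N, q (Z ω) ∂Pf
        = ∫ ω in Z ⁻¹' N,
            (Pf[(fun ω => if T ω = t then (1:ℝ) else 0) |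
              MeasurableSpace.comap Z inferInstance]) ω ∂Pf := by
          refine setIntegral_congr_ae (hZ hNmeas) ?_
          exact hq_ver.mono fun ω h _ => h
      _ = ∫ ω in Z ⁻¹' N, (if T ω = t then (1:ℝ) else 0) ∂Pf :=
          setIntegral_condExp hmZ hind_int hZN
      _ = 0 := hind
  have hqμ : ∫ z in N, q z ∂μ = 0 := by
    rw [hμdef, setIntegral_map hNmeas hq.aestronglyMeasurable hZ.aemeasurable]
    exact hqN
  have hq_pos_μ : ∀ᵐ z ∂μ, 0 < q z := by
    rw [hμdef, ae_map_iff hZ.aemeasurable (measurableSet_lt measurable_const hq)]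
    exact hq_pos
  have hμN : μ N = 0 := by
    have hnonneg : 0 ≤ᵐ[μ.restrict N] q :=
      ae_restrict_of_ae (hq_pos_μ.mono fun z h => h.le)
    have hint : IntegrableOn q N μ :=
      ((integrable_map_measure hq.aestronglyMeasurable hZ.aemeasurable).mpr hqint).integrableOn
    have hz := (setIntegral_eq_zero_iff_of_nonneg_ae hnonneg hint).1 hqμ
    have hfalse : ∀ᵐ z ∂μ.restrict N, False := by
      filter_upwards [hz, ae_restrict_of_ae hq_pos_μ] with z h1 h2
      rw [h1] at h2; exact lt_irrefl 0 h2
    have h2 := ae_iff.mp hfalse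
    simp only [not_false_iff, Set.setOf_true] at h2
    exact Measure.restrict_eq_zero.mp (Measure.measure_univ_eq_zero.mp h2)
  have hPfZN : Pf (Z ⁻¹' N) = 0 := by
    rw [hμdef, Measure.map_apply hZ hNmeas] at hμN; exact hμN
  have hPtZN : Pt (Z ⁻¹' N) = 0 := by
    have : Measure.map Z Pt N = 0 := by rw [hlaw]; exact hμN
    rwa [Measure.map_apply hZ hNmeas] at this
  have hPf_ku : (fun ω => kt (Z ω)) =ᵐ[Pf] (fun ω => ut (Z ω)) := by
    rw [Filter.eventuallyEq_iff_exists_mem]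
    exact ⟨(Z ⁻¹' N)ᶜ, by rwa [mem_ae_iff, compl_compl],
      fun ω hω => not_not.mp hω⟩
  have hPt_ku : (fun ω => kt (Z ω)) =ᵐ[Pt] (fun ω => ut (Z ω)) := by
    rw [Filter.eventuallyEq_iff_exists_mem]
    exact ⟨(Z ⁻¹' N)ᶜ, by rwa [mem_ae_iff, compl_compl],
      fun ω hω => not_not.mp hω⟩
  -- u∘W = ut∘Z a.e. under Pt
  have hW_ut : (fun ω => u (W ω)) =ᵐ[Pt] (fun ω => ut (Z ω)) := by
    filter_upwards [hTa] with ω hω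
    simp [hWdef, hutdef, hZdef, hω]
  -- Step B: under Pt, mt ∘ X is a version of E[kt ∘ Z | σ(X)]
  have hWcond : Pt[Y | MeasurableSpace.comap X inferInstance] =ᵐ[Pt]
      Pt[(fun ω => kt (Z ω)) | MeasurableSpace.comap X inferInstance] := by
    calc Pt[Y | MeasurableSpace.comap X inferInstance]
        =ᵐ[Pt] Pt[Pt[Y | MeasurableSpace.comap W inferInstance] |
          MeasurableSpace.comap X inferInstance] := (condExp_condExp_of_le hXW hmW).symm
      _ =ᵐ[Pt] Pt[(fun ω => u (W ω)) | MeasurableSpace.comap X inferInstance] :=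
          condExp_congr_ae hut.symm
      _ =ᵐ[Pt] Pt[(fun ω => ut (Z ω)) | MeasurableSpace.comap X inferInstance] :=
          condExp_congr_ae hW_ut
      _ =ᵐ[Pt] Pt[(fun ω => kt (Z ω)) | MeasurableSpace.comap X inferInstance] :=
          condExp_congr_ae hPt_ku.symm
  have hstep : (fun ω => mt (X ω)) =ᵐ[Pt]
      Pt[(fun ω => kt (Z ω)) | MeasurableSpace.comap X inferInstance] :=
    hver.trans hWcond
  -- integrability facts
  have hut_int_Pt : Integrable (fun ω => ut (Z ω)) Pt :=
    (integrable_condExp.congr hut.symm).congr hW_ut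
  have hut_int_Pf : Integrable (fun ω => ut (Z ω)) Pf := by
    have h1 : Integrable ut (Measure.map Z Pt) :=
      (integrable_map_measure hut_meas.aestronglyMeasurable hZ.aemeasurable).mpr hut_int_Pt
    rw [hlaw] at h1
    exact (integrable_map_measure hut_meas.aestronglyMeasurable hZ.aemeasurable).mp h1
  have hkt_int_Pf : Integrable (fun ω => kt (Z ω)) Pf := hut_int_Pf.congr hPf_ku.symm
  have hkt_int_Pt : Integrable (fun ω => kt (Z ω)) Pt := hut_int_Pt.congr hPt_ku.symm
  have hmtX_int_Pt : Integrable (fun ω => mt (X ω)) Pt := integrable_condExp.congr hver.symm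
  have hXlaw : Measure.map X Pt = Measure.map X Pf := by
    have hXc : X = (fun z : 𝒞 × ℝ => z.2) ∘ Z := rfl
    rw [hXc, ← Measure.map_map measurable_snd hZ, ← Measure.map_map measurable_snd hZ, hlaw]
  have hmtX_int_Pf : Integrable (fun ω => mt (X ω)) Pf := by
    have h1 : Integrable mt (Measure.map X Pt) :=
      (integrable_map_measure hmt.aestronglyMeasurable hX.aemeasurable).mpr hmtX_int_Pt
    rw [hXlaw] at h1
    exact (integrable_map_measure hmt.aestronglyMeasurable hX.aemeasurable).mp h1
  -- Step C: uniqueness of conditional expectation under Pf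
  refine ae_eq_condExp_of_forall_setIntegral_eq hmX hkt_int_Pf
    (fun s _ _ => hmtX_int_Pf.integrableOn) ?_ ?_
  · rintro s ⟨A, hA, rfl⟩ -
    have hsX : MeasurableSet[MeasurableSpace.comap X inferInstance] (X ⁻¹' A) :=
      ⟨A, hA, rfl⟩
    have hB : MeasurableSet ((fun z : 𝒞 × ℝ => z.2) ⁻¹' A) := measurable_snd hA
    have hZA : X ⁻¹' A = Z ⁻¹' ((fun z : 𝒞 × ℝ => z.2) ⁻¹' A) := rfl
    calc ∫ ω in X ⁻¹' A, mt (X ω) ∂Pf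
        = ∫ x in A, mt x ∂(Measure.map X Pf) :=
          (setIntegral_map hA hmt.aestronglyMeasurable hX.aemeasurable).symm
      _ = ∫ x in A, mt x ∂(Measure.map X Pt) := by rw [hXlaw]
      _ = ∫ ω in X ⁻¹' A, mt (X ω) ∂Pt :=
          setIntegral_map hA hmt.aestronglyMeasurable hX.aemeasurable
      _ = ∫ ω in X ⁻¹' A,
            (Pt[(fun ω => kt (Z ω)) | MeasurableSpace.comap X inferInstance]) ω ∂Pt := by
          refine setIntegral_congr_ae (hX hA) ?_
          exact hstep.mono fun ω h _ => h
      _ = ∫ ω in X ⁻¹' A, kt (Z ω) ∂Pt := setIntegral_condExp hmX hkt_int_Pt hsX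
      _ = ∫ z in (fun z : 𝒞 × ℝ => z.2) ⁻¹' A, kt z ∂(Measure.map Z Pt) := by
          rw [setIntegral_map hB hkt_meas.aestronglyMeasurable hZ.aemeasurable, ← hZA]
      _ = ∫ z in (fun z : 𝒞 × ℝ => z.2) ⁻¹' A, kt z ∂(Measure.map Z Pf) := by rw [hlaw]
      _ = ∫ ω in X ⁻¹' A, kt (Z ω) ∂Pf := by
          rw [setIntegral_map hB hkt_meas.aestronglyMeasurable hZ.aemeasurable, ← hZA]
  · have hXm : Measurable[MeasurableSpace.comap X inferInstance] X :=
      Measurable.of_comap_le le_rfl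
    exact StronglyMeasurable.aestronglyMeasurable
      (Measurable.stronglyMeasurable (hmt.comp hXm))

lemma fin2_ind_eq (s : Fin 2) :
    (if s = 0 then (1:ℝ) else 0) = 1 - (if s = 1 then (1:ℝ) else 0) := by
  fin_cases s <;> norm_num

/-- intermediate identity in the fuzzy RDD: with `(C, X)` strongly
sufficient covariates and `k(C, X, T)` a version of `E_{P_f}[Y | σ(C, X, T)]`, for each
`t ∈ {0, 1}` any version `m_t(X)` of `E_{P_t}[Y | σ(X)]` is also a version of
`E_{P_f}[k(C, X, t) | σ(X)]` under the observational regime `P_f`. -/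
theorem fuzzy_rdd_interventional_regression_on_X_identified
    {Ω 𝒞 : Type*} [MeasurableSpace Ω] [MeasurableSpace 𝒞] [StandardBorelSpace 𝒞]
    (C : Ω → 𝒞) (X : Ω → ℝ) (T : Ω → Fin 2) (Y : Ω → ℝ)
    (hC : Measurable C) (hX : Measurable X) (hT : Measurable T) (hY : Measurable Y)
    (P₀ P₁ Pf : Measure Ω)
    [IsProbabilityMeasure P₀] [IsProbabilityMeasure P₁] [IsProbabilityMeasure Pf]
    (hT0 : P₀ {ω | T ω = 0} = 1) (hT1 : P₁ {ω | T ω = 1} = 1)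
    (hYint : ∀ P ∈ ({P₀, P₁, Pf} : Set (Measure Ω)), Integrable Y P)
    -- strongly sufficient covariates:
    (h4a : Measure.map (fun ω => (C ω, X ω)) P₀ = Measure.map (fun ω => (C ω, X ω)) P₁ ∧
           Measure.map (fun ω => (C ω, X ω)) P₀ = Measure.map (fun ω => (C ω, X ω)) Pf)
    (u : 𝒞 × ℝ × Fin 2 → ℝ) (hu_meas : Measurable u)
    (h4b : ∀ P ∈ ({P₀, P₁, Pf} : Set (Measure Ω)),
      (fun ω => u (C ω, X ω, T ω)) =ᵐ[P]
        P[Y | MeasurableSpace.comap (fun ω => (C ω, X ω, T ω)) inferInstance])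
    (p : 𝒞 × ℝ → ℝ) (hp_meas : Measurable p) (hp_range : ∀ z, p z ∈ Set.Icc (0 : ℝ) 1)
    (hp_ver : (fun ω => p (C ω, X ω)) =ᵐ[Pf]
      Pf[(fun ω => if T ω = 1 then (1 : ℝ) else 0) |
        MeasurableSpace.comap (fun ω => (C ω, X ω)) inferInstance])
    (hp_pos : ∀ᵐ ω ∂Pf, 0 < p (C ω, X ω) ∧ p (C ω, X ω) < 1)
    -- k(C, X, T) is a version of E_{P_f}[Y | σ(C, X, T)]
    (k : 𝒞 × ℝ × Fin 2 → ℝ) (hk_meas : Measurable k)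
    (hk : (fun ω => k (C ω, X ω, T ω)) =ᵐ[Pf]
      Pf[Y | MeasurableSpace.comap (fun ω => (C ω, X ω, T ω)) inferInstance]) :
    ∀ t : Fin 2, ∀ mt : ℝ → ℝ, Measurable mt →
      ((fun ω => mt (X ω)) =ᵐ[if t = 0 then P₀ else P₁]
        (if t = 0 then P₀ else P₁)[Y | MeasurableSpace.comap X inferInstance]) →
      (fun ω => mt (X ω)) =ᵐ[Pf]
        Pf[(fun ω => k (C ω, X ω, t)) | MeasurableSpace.comap X inferInstance] := by
  intro t mt hmt hver
  have hu_f := h4b Pf (by simp)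
  have hu_0 := h4b P₀ (by simp)
  have hu_1 := h4b P₁ (by simp)
  fin_cases t
  · -- t = 0
    simp only [if_pos rfl] at hver
    have hmZ : MeasurableSpace.comap (fun ω => (C ω, X ω)) inferInstance ≤
        ‹MeasurableSpace Ω› := (hC.prodMk hX).comap_le
    have hTset1 : MeasurableSet {ω | T ω = (1 : Fin 2)} := hT (measurableSet_singleton 1)
    have hind1_int : Integrable (fun ω => if T ω = 1 then (1:ℝ) else 0) Pf := by
      have := (integrable_const (1:ℝ)).indicator (μ := Pf) hTset1
      refine this.congr (Filter.Eventually.of_forall fun ω => ?_)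
      simp [Set.indicator_apply]
    have hq_ver : (fun ω => 1 - p (C ω, X ω)) =ᵐ[Pf]
        Pf[(fun ω => if T ω = (0 : Fin 2) then (1:ℝ) else 0) |
          MeasurableSpace.comap (fun ω => (C ω, X ω)) inferInstance] := by
      have heq : (fun ω => if T ω = (0 : Fin 2) then (1:ℝ) else 0)
          = (fun _ : Ω => (1:ℝ)) - (fun ω => if T ω = 1 then (1:ℝ) else 0) := by
        funext ω
        simpa [Pi.sub_apply] using fin2_ind_eq (T ω)
      rw [heq]
      have hsub := condExp_sub (μ := Pf)
        (m := MeasurableSpace.comap (fun ω => (C ω, X ω)) inferInstance)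
        (integrable_const (1:ℝ)) hind1_int
      have hconst := condExp_const (μ := Pf) hmZ (1:ℝ)
      filter_upwards [hp_ver, hsub] with ω h1 h2
      simp [h2, Pi.sub_apply, hconst, ← h1]
    exact fuzzy_rdd_aux C X T Y hC hX hT P₀ Pf 0 hT0 h4a.2 u hu_meas hu_0 hu_f
      (fun z => 1 - p z) (measurable_const.sub hp_meas) hq_ver
      (by filter_upwards [hp_pos] with ω h; linarith [h.2]) k hk_meas hk mt hmt hver
  · -- t = 1
    have h10 : ((1 : Fin 2) = 0) = False := by simp
    simp only [h10, if_false] at hver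
    exact fuzzy_rdd_aux C X T Y hC hX hT P₁ Pf 1 hT1 (h4a.1.symm.trans h4a.2) u hu_meas
      hu_1 hu_f p hp_meas hp_ver
      (by filter_upwards [hp_pos] with ω h; exact h.1) k hk_meas hk mt hmt hver
end
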